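/- arXiv:2604.24097 — 3 statements merged into one kernel-verified Lean document; each statement's English description precedes it below -/
import Mathlib

section
/- Let p ≥ 5 be a prime and let G = C_p × C_p be the direct product of two cyclic groups of order p. Then the number of Beauville structures for G is |𝕌(G)| = (p+1)·p·(p−1)³·(p−2)·(p−3)·(p−4). -/
open Subgroup Equiv

namespace Beauville

variable {G : Type*} [Group G]

/-- `𝕋(G)`: generating triples with product 1. -/
def TripleSet (G : Type*) [Group G] : Set (G × G × G) :=
  {t | Subgroup.closure {t.1, t.2.1} = ⊤ ∧ t.1 * t.2.1 * t.2.2 = 1}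

lemma mem_tripleSet {x y z : G} :
    (x, y, z) ∈ TripleSet G ↔ Subgroup.closure {x, y} = ⊤ ∧ x * y * z = 1 := Iff.rfl

lemma closure_pair_top_of {x y u v : G} (h : Subgroup.closure {x, y} = ⊤)
    (hx : x ∈ Subgroup.closure {u, v}) (hy : y ∈ Subgroup.closure {u, v}) :
    Subgroup.closure ({u, v} : Set G) = ⊤ := by
  rw [eq_top_iff, ← h, Subgroup.closure_le]
  intro g hg
  simp only [Set.mem_insert_iff, Set.mem_singleton_iff] at hg
  rcases hg with rfl | rfl
  · exact hx
  · exact hy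

lemma mem_cp_left (u v : G) : u ∈ Subgroup.closure ({u, v} : Set G) :=
  Subgroup.subset_closure (Set.mem_insert _ _)

lemma mem_cp_right (u v : G) : v ∈ Subgroup.closure ({u, v} : Set G) :=
  Subgroup.subset_closure (Set.mem_insert_of_mem _ rfl)

lemma closure_pair_map_top (f : G ≃* G) {x y : G} (h : Subgroup.closure {x, y} = ⊤) :
    Subgroup.closure ({f x, f y} : Set G) = ⊤ := by
  have himg : ({f x, f y} : Set G) = f.toMonoidHom '' {x, y} := (Set.image_pair _ _ _).symm
  rw [himg, ← MonoidHom.map_closure, h, ← MonoidHom.range_eq_map]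
  simpa [MonoidHom.range_eq_top] using f.surjective

section Perms

/-- raw permutation `σ₁ : (x,y,z) ↦ (y,z,x)`. -/
def rotRaw : Equiv.Perm (G × G × G) where
  toFun t := (t.2.1, t.2.2, t.1)
  invFun t := (t.2.2, t.1, t.2.1)
  left_inv _ := rfl
  right_inv _ := rfl

@[simp] lemma rotRaw_apply (t : G × G × G) : rotRaw t = (t.2.1, t.2.2, t.1) := rfl

lemma rotRaw_mem {t : G × G × G} (ht : t ∈ TripleSet G) : rotRaw t ∈ TripleSet G := by
  obtain ⟨x, y, z⟩ := t
  rw [mem_tripleSet] at ht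
  obtain ⟨hc, hp⟩ := ht
  rw [rotRaw_apply]
  have hx : x = (y * z)⁻¹ := by
    rw [mul_assoc] at hp
    exact eq_inv_of_mul_eq_one_left hp
  refine mem_tripleSet.2 ⟨closure_pair_top_of hc ?_ ?_, ?_⟩
  · rw [hx]
    exact inv_mem (mul_mem (mem_cp_left _ _) (mem_cp_right _ _))
  · exact mem_cp_left _ _
  · rw [hx, mul_inv_cancel]

lemma rotRaw_iff (t : G × G × G) : t ∈ TripleSet G ↔ rotRaw t ∈ TripleSet G :=
  ⟨fun h => rotRaw_mem h, fun h => by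
    have h2 := rotRaw_mem (rotRaw_mem h)
    rwa [show rotRaw (rotRaw (rotRaw t)) = t by simp] at h2⟩

/-- `σ₁` as a permutation of `𝕋(G)`. -/
def sigma1T (G : Type*) [Group G] : Equiv.Perm (TripleSet G) :=
  rotRaw.subtypePerm (fun t => (rotRaw_iff t).symm)

/-- `σ₂ = σ₁ ∘ σ₁`, acting as `(x,y,z) ↦ (z,x,y)`. -/
def sigma2T (G : Type*) [Group G] : Equiv.Perm (TripleSet G) :=
  sigma1T G * sigma1T G

/-- raw permutation `σ₃ : (x,y,z) ↦ (z,y,x^y)`. -/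
def sigma3Raw : Equiv.Perm (G × G × G) where
  toFun t := (t.2.2, t.2.1, t.2.1⁻¹ * t.1 * t.2.1)
  invFun t := (t.2.1 * t.2.2 * t.2.1⁻¹, t.2.1, t.1)
  left_inv := by rintro ⟨x, y, z⟩; simp [mul_assoc]
  right_inv := by rintro ⟨x, y, z⟩; simp [mul_assoc]

@[simp] lemma sigma3Raw_apply (t : G × G × G) :
    sigma3Raw t = (t.2.2, t.2.1, t.2.1⁻¹ * t.1 * t.2.1) := rfl

@[simp] lemma sigma3Raw_symm_apply (t : G × G × G) :
    sigma3Raw.symm t = (t.2.1 * t.2.2 * t.2.1⁻¹, t.2.1, t.1) := rfl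

lemma sigma3Raw_mem {t : G × G × G} (ht : t ∈ TripleSet G) : sigma3Raw t ∈ TripleSet G := by
  obtain ⟨x, y, z⟩ := t
  rw [mem_tripleSet] at ht
  obtain ⟨hc, hp⟩ := ht
  have hz : z = (x * y)⁻¹ := eq_inv_of_mul_eq_one_right hp
  rw [sigma3Raw_apply]
  refine mem_tripleSet.2 ⟨closure_pair_top_of hc ?_ ?_, ?_⟩
  · have hxe : x = z⁻¹ * y⁻¹ := by rw [hz]; group
    rw [hxe]
    exact mul_mem (inv_mem (mem_cp_left _ _)) (inv_mem (mem_cp_right _ _))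
  · exact mem_cp_right _ _
  · rw [hz]; group

lemma sigma3Raw_symm_mem {t : G × G × G} (ht : t ∈ TripleSet G) :
    sigma3Raw.symm t ∈ TripleSet G := by
  obtain ⟨x, y, z⟩ := t
  rw [mem_tripleSet] at ht
  obtain ⟨hc, hp⟩ := ht
  have hz : z = (x * y)⁻¹ := eq_inv_of_mul_eq_one_right hp
  rw [sigma3Raw_symm_apply]
  refine mem_tripleSet.2 ⟨closure_pair_top_of hc ?_ ?_, ?_⟩
  · have hxe : x = y⁻¹ * (y * z * y⁻¹)⁻¹ := by rw [hz]; group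
    rw [hxe]
    exact mul_mem (inv_mem (mem_cp_right _ _)) (inv_mem (mem_cp_left _ _))
  · exact mem_cp_right _ _
  · rw [hz]; group

lemma sigma3Raw_iff (t : G × G × G) : t ∈ TripleSet G ↔ sigma3Raw t ∈ TripleSet G :=
  ⟨fun h => sigma3Raw_mem h, fun h => by
    have h2 := sigma3Raw_symm_mem h
    rwa [Equiv.symm_apply_apply] at h2⟩

/-- `σ₃` as a permutation of `𝕋(G)`. -/
def sigma3T (G : Type*) [Group G] : Equiv.Perm (TripleSet G) :=
  sigma3Raw.subtypePerm (fun t => (sigma3Raw_iff t).symm)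

/-- raw permutation `σ₄ : (x,y,z) ↦ (y,x,z^x)`. -/
def sigma4Raw : Equiv.Perm (G × G × G) where
  toFun t := (t.2.1, t.1, t.1⁻¹ * t.2.2 * t.1)
  invFun t := (t.2.1, t.1, t.2.1 * t.2.2 * t.2.1⁻¹)
  left_inv := by rintro ⟨x, y, z⟩; simp [mul_assoc]
  right_inv := by rintro ⟨x, y, z⟩; simp [mul_assoc]

@[simp] lemma sigma4Raw_apply (t : G × G × G) :
    sigma4Raw t = (t.2.1, t.1, t.1⁻¹ * t.2.2 * t.1) := rfl

@[simp] lemma sigma4Raw_symm_apply (t : G × G × G) :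
    sigma4Raw.symm t = (t.2.1, t.1, t.2.1 * t.2.2 * t.2.1⁻¹) := rfl

lemma sigma4Raw_mem {t : G × G × G} (ht : t ∈ TripleSet G) : sigma4Raw t ∈ TripleSet G := by
  obtain ⟨x, y, z⟩ := t
  rw [mem_tripleSet] at ht
  obtain ⟨hc, hp⟩ := ht
  have hz : z = (x * y)⁻¹ := eq_inv_of_mul_eq_one_right hp
  rw [sigma4Raw_apply]
  refine mem_tripleSet.2 ⟨closure_pair_top_of hc ?_ ?_, ?_⟩
  · exact mem_cp_right _ _
  · exact mem_cp_left _ _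
  · rw [hz]; group

lemma sigma4Raw_symm_mem {t : G × G × G} (ht : t ∈ TripleSet G) :
    sigma4Raw.symm t ∈ TripleSet G := by
  obtain ⟨x, y, z⟩ := t
  rw [mem_tripleSet] at ht
  obtain ⟨hc, hp⟩ := ht
  have hz : z = (x * y)⁻¹ := eq_inv_of_mul_eq_one_right hp
  rw [sigma4Raw_symm_apply]
  refine mem_tripleSet.2 ⟨closure_pair_top_of hc ?_ ?_, ?_⟩
  · exact mem_cp_right _ _
  · exact mem_cp_left _ _
  · rw [hz]; group

lemma sigma4Raw_iff (t : G × G × G) : t ∈ TripleSet G ↔ sigma4Raw t ∈ TripleSet G :=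
  ⟨fun h => sigma4Raw_mem h, fun h => by
    have h2 := sigma4Raw_symm_mem h
    rwa [Equiv.symm_apply_apply] at h2⟩

/-- `σ₄` as a permutation of `𝕋(G)`. -/
def sigma4T (G : Type*) [Group G] : Equiv.Perm (TripleSet G) :=
  sigma4Raw.subtypePerm (fun t => (sigma4Raw_iff t).symm)

/-- raw permutation `σ₅ : (x,y,z) ↦ (x,z,y^z)`. -/
def sigma5Raw : Equiv.Perm (G × G × G) where
  toFun t := (t.1, t.2.2, t.2.2⁻¹ * t.2.1 * t.2.2)
  invFun t := (t.1, t.2.1 * t.2.2 * t.2.1⁻¹, t.2.1)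
  left_inv := by rintro ⟨x, y, z⟩; simp [mul_assoc]
  right_inv := by rintro ⟨x, y, z⟩; simp [mul_assoc]

@[simp] lemma sigma5Raw_apply (t : G × G × G) :
    sigma5Raw t = (t.1, t.2.2, t.2.2⁻¹ * t.2.1 * t.2.2) := rfl

@[simp] lemma sigma5Raw_symm_apply (t : G × G × G) :
    sigma5Raw.symm t = (t.1, t.2.1 * t.2.2 * t.2.1⁻¹, t.2.1) := rfl

lemma sigma5Raw_mem {t : G × G × G} (ht : t ∈ TripleSet G) : sigma5Raw t ∈ TripleSet G := by
  obtain ⟨x, y, z⟩ := t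
  rw [mem_tripleSet] at ht
  obtain ⟨hc, hp⟩ := ht
  have hz : z = (x * y)⁻¹ := eq_inv_of_mul_eq_one_right hp
  rw [sigma5Raw_apply]
  refine mem_tripleSet.2 ⟨closure_pair_top_of hc ?_ ?_, ?_⟩
  · exact mem_cp_left _ _
  · have hye : y = x⁻¹ * z⁻¹ := by rw [hz]; group
    rw [hye]
    exact mul_mem (inv_mem (mem_cp_left _ _)) (inv_mem (mem_cp_right _ _))
  · rw [hz]; group

lemma sigma5Raw_symm_mem {t : G × G × G} (ht : t ∈ TripleSet G) :
    sigma5Raw.symm t ∈ TripleSet G := by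
  obtain ⟨x, y, z⟩ := t
  rw [mem_tripleSet] at ht
  obtain ⟨hc, hp⟩ := ht
  have hz : z = (x * y)⁻¹ := eq_inv_of_mul_eq_one_right hp
  rw [sigma5Raw_symm_apply]
  refine mem_tripleSet.2 ⟨closure_pair_top_of hc ?_ ?_, ?_⟩
  · exact mem_cp_left _ _
  · have hv : y * z * y⁻¹ = x⁻¹ * y⁻¹ := by rw [hz]; group
    rw [hv]
    have h2 : (x * (x⁻¹ * y⁻¹))⁻¹ ∈ Subgroup.closure ({x, x⁻¹ * y⁻¹} : Set G) :=
      inv_mem (mul_mem (mem_cp_left _ _) (mem_cp_right _ _))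
    simpa using h2
  · rw [hz]; group

lemma sigma5Raw_iff (t : G × G × G) : t ∈ TripleSet G ↔ sigma5Raw t ∈ TripleSet G :=
  ⟨fun h => sigma5Raw_mem h, fun h => by
    have h2 := sigma5Raw_symm_mem h
    rwa [Equiv.symm_apply_apply] at h2⟩

/-- `σ₅` as a permutation of `𝕋(G)`. -/
def sigma5T (G : Type*) [Group G] : Equiv.Perm (TripleSet G) :=
  sigma5Raw.subtypePerm (fun t => (sigma5Raw_iff t).symm)

end Perms


/-- Evaluation of a word in two letters at a pair of group elements. -/
def wordEval (w : FreeGroup Bool) (x y : G) : G :=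
  FreeGroup.lift (fun b => bif b then x else y) w

lemma wordEval_conj (w : FreeGroup Bool) (x y c : G) :
    wordEval w (c⁻¹ * x * c) (c⁻¹ * y * c) = c⁻¹ * wordEval w x y * c := by
  have key : FreeGroup.lift (fun b => bif b then c⁻¹ * x * c else c⁻¹ * y * c) =
      ((MulAut.conj c⁻¹).toMonoidHom.comp (FreeGroup.lift (fun b => bif b then x else y))) := by
    apply FreeGroup.ext_hom
    intro b
    cases b <;> simp [MulAut.conj_apply, mul_assoc]
  unfold wordEval
  rw [key]
  simp [MulAut.conj_apply, mul_assoc]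

/-- Conjugation of a triple by a group element (`t^c`). -/
def conjTriple (c : G) (t : G × G × G) : G × G × G :=
  (c⁻¹ * t.1 * c, c⁻¹ * t.2.1 * c, c⁻¹ * t.2.2 * c)

lemma conjTriple_conjTriple (c d : G) (t : G × G × G) :
    conjTriple d (conjTriple c t) = conjTriple (c * d) t := by
  simp [conjTriple, mul_assoc]

@[simp] lemma conjTriple_one (t : G × G × G) : conjTriple 1 t = t := by
  simp [conjTriple]

lemma conjTriple_mem (c : G) {t : G × G × G} (ht : t ∈ TripleSet G) :
    conjTriple c t ∈ TripleSet G := by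
  obtain ⟨x, y, z⟩ := t
  rw [mem_tripleSet] at ht
  obtain ⟨hc, hp⟩ := ht
  refine mem_tripleSet.2 ⟨?_, ?_⟩
  · have h1 : (c⁻¹ * x * c : G) = (MulAut.conj c⁻¹ : G ≃* G) x := by
      simp [MulAut.conj_apply]
    have h2 : (c⁻¹ * y * c : G) = (MulAut.conj c⁻¹ : G ≃* G) y := by
      simp [MulAut.conj_apply]
    rw [h1, h2]
    exact closure_pair_map_top _ hc
  · have : c⁻¹ * x * c * (c⁻¹ * y * c) * (c⁻¹ * z * c) = c⁻¹ * (x * y * z) * c := by group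
    rw [this, hp]
    group

/-- The raw permutation `β_w : t ↦ t^{w(x,y)}`. -/
def betaRaw (w : FreeGroup Bool) : Equiv.Perm (G × G × G) where
  toFun t := conjTriple (wordEval w t.1 t.2.1) t
  invFun t := conjTriple (wordEval w t.1 t.2.1)⁻¹ t
  left_inv := by
    rintro ⟨x, y, z⟩
    have h1 : wordEval w (conjTriple (wordEval w x y) (x, y, z)).1
        (conjTriple (wordEval w x y) (x, y, z)).2.1 = wordEval w x y := by
      show wordEval w ((wordEval w x y)⁻¹ * x * wordEval w x y)
          ((wordEval w x y)⁻¹ * y * wordEval w x y) = _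
      rw [wordEval_conj]
      group
    show conjTriple _ (conjTriple (wordEval w x y) (x, y, z)) = (x, y, z)
    rw [h1, conjTriple_conjTriple, mul_inv_cancel, conjTriple_one]
  right_inv := by
    rintro ⟨x, y, z⟩
    have h1 : wordEval w (conjTriple (wordEval w x y)⁻¹ (x, y, z)).1
        (conjTriple (wordEval w x y)⁻¹ (x, y, z)).2.1 = wordEval w x y := by
      show wordEval w ((wordEval w x y)⁻¹⁻¹ * x * (wordEval w x y)⁻¹)
          ((wordEval w x y)⁻¹⁻¹ * y * (wordEval w x y)⁻¹) = _
      rw [wordEval_conj]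
      group
    show conjTriple _ (conjTriple (wordEval w x y)⁻¹ (x, y, z)) = (x, y, z)
    rw [h1, conjTriple_conjTriple, inv_mul_cancel, conjTriple_one]

lemma betaRaw_iff (w : FreeGroup Bool) (t : G × G × G) :
    t ∈ TripleSet G ↔ betaRaw w t ∈ TripleSet G := by
  constructor
  · intro h
    exact conjTriple_mem _ h
  · intro h
    have h2 : (betaRaw w).symm (betaRaw w t) ∈ TripleSet G := conjTriple_mem _ h
    rwa [Equiv.symm_apply_apply] at h2

/-- `β_w` as a permutation of `𝕋(G)`. -/
def betaT (G : Type*) [Group G] (w : FreeGroup Bool) : Equiv.Perm (TripleSet G) :=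
  (betaRaw w).subtypePerm (fun t => (betaRaw_iff w t).symm)

/-- The raw diagonal action of an automorphism on triples. -/
def autRaw (α : MulAut G) : Equiv.Perm (G × G × G) :=
  Equiv.prodCongr (α : G ≃* G).toEquiv
    (Equiv.prodCongr (α : G ≃* G).toEquiv (α : G ≃* G).toEquiv)

@[simp] lemma autRaw_apply (α : MulAut G) (t : G × G × G) :
    autRaw α t = (α t.1, α t.2.1, α t.2.2) := rfl

lemma autRaw_mem (α : MulAut G) {t : G × G × G} (ht : t ∈ TripleSet G) :
    autRaw α t ∈ TripleSet G := by
  obtain ⟨x, y, z⟩ := t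
  rw [mem_tripleSet] at ht
  obtain ⟨hc, hp⟩ := ht
  rw [autRaw_apply]
  refine mem_tripleSet.2 ⟨closure_pair_map_top (α : G ≃* G) hc, ?_⟩
  rw [← map_mul, ← map_mul, hp, map_one]

lemma autRaw_symm_apply (α : MulAut G) (t : G × G × G) :
    (autRaw α).symm t = autRaw α⁻¹ t := rfl

lemma autRaw_iff (α : MulAut G) (t : G × G × G) :
    t ∈ TripleSet G ↔ autRaw α t ∈ TripleSet G := by
  constructor
  · exact fun h => autRaw_mem α h
  · intro h
    have h2 := autRaw_mem α⁻¹ h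
    rw [← autRaw_symm_apply, Equiv.symm_apply_apply] at h2
    exact h2

/-- `α̃`, the diagonal action of an automorphism on `𝕋(G)`. -/
def dAutT (α : MulAut G) : Equiv.Perm (TripleSet G) :=
  (autRaw α).subtypePerm (fun t => (autRaw_iff α t).symm)

/-- `ι̃_g`, the diagonal action of the inner automorphism `ι_g` on `𝕋(G)`. -/
def dInnT (g : G) : Equiv.Perm (TripleSet G) :=
  dAutT (MulAut.conj g)

/-- `J(G) = {β_w : w a word in two letters}`. -/
def JSet (G : Type*) [Group G] : Set (Equiv.Perm (TripleSet G)) :=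
  Set.range (betaT G)

/-- The subgroup `⟨σ₁, σ₄⟩` of `Sym(𝕋(G))`. -/
def SS14 (G : Type*) [Group G] : Subgroup (Equiv.Perm (TripleSet G)) :=
  Subgroup.closure {sigma1T G, sigma4T G}

/-- `I(G) = ⟨DInn(G), σ₁, σ₂, σ₃, σ₄, σ₅⟩`. -/
def IGroup (G : Type*) [Group G] : Subgroup (Equiv.Perm (TripleSet G)) :=
  Subgroup.closure (Set.range (dInnT (G := G)) ∪
    {sigma1T G, sigma2T G, sigma3T G, sigma4T G, sigma5T G})


/-- `Σ(x,y)`: the union of all conjugates of `⟨x⟩`, `⟨y⟩` and `⟨x*y⟩`. -/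
def sigmaSet (x y : G) : Set G :=
  ⋃ g : G, (fun h => g * h * g⁻¹) ''
    ((Subgroup.zpowers x : Set G) ∪ (Subgroup.zpowers y : Set G) ∪
      (Subgroup.zpowers (x * y) : Set G))

/-- An (unmixed) Beauville structure for `G`. -/
def IsBeauvilleStructure (t : (G × G × G) × (G × G × G)) : Prop :=
  ∃ x₁ y₁ x₂ y₂ : G,
    t = ((x₁, y₁, (x₁ * y₁)⁻¹), (x₂, y₂, (x₂ * y₂)⁻¹)) ∧
    Subgroup.closure {x₁, y₁} = ⊤ ∧ Subgroup.closure {x₂, y₂} = ⊤ ∧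
    sigmaSet x₁ y₁ ∩ sigmaSet x₂ y₂ = {1}

/-- `𝕌(G)`, the set of all Beauville structures for `G`, as a subset of `G³ × G³`. -/
def beauvilleStructures (G : Type*) [Group G] : Set ((G × G × G) × (G × G × G)) :=
  {t | IsBeauvilleStructure t}

/-- A Beauville group is a group admitting a Beauville structure. -/
def IsBeauvilleGroup (G : Type*) [Group G] : Prop :=
  ∃ t : (G × G × G) × (G × G × G), IsBeauvilleStructure t

/-- A metacyclic group: it has a cyclic normal subgroup with cyclic quotient. -/
def IsMetacyclic (G : Type*) [Group G] : Prop :=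
  ∃ (N : Subgroup G) (hN : N.Normal), IsCyclic N ∧
    (haveI := hN; IsCyclic (G ⧸ N))

/-- `𝕌(G)` viewed as a subset of `𝕋(G) × 𝕋(G)`. -/
def USet (G : Type*) [Group G] : Set (TripleSet G × TripleSet G) :=
  {t | IsBeauvilleStructure ((t.1 : G × G × G), (t.2 : G × G × G))}

/-- Generators of `B(G)`: the permutations of `𝕌(G)` induced by the componentwise action
of `I(G) × I(G)` and by the diagonal action of `Aut(G)`. -/
def BGens (G : Type*) [Group G] : Set (Equiv.Perm (USet G)) :=
  {π | ∃ ρ₁ ∈ IGroup G, ∃ ρ₂ ∈ IGroup G,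
      ∀ t : USet G, ((π t : TripleSet G × TripleSet G)) = (ρ₁ (t : TripleSet G × TripleSet G).1, ρ₂ (t : TripleSet G × TripleSet G).2)} ∪
  {π | ∃ α : MulAut G,
      ∀ t : USet G, ((π t : TripleSet G × TripleSet G)) = (dAutT α (t : TripleSet G × TripleSet G).1, dAutT α (t : TripleSet G × TripleSet G).2)}

/-- The permutation(s) of `𝕌(G)` exchanging the two triples. -/
def tauGens (G : Type*) [Group G] : Set (Equiv.Perm (USet G)) :=
  {π | ∀ t : USet G, ((π t : TripleSet G × TripleSet G)) =
      ((t : TripleSet G × TripleSet G).2, (t : TripleSet G × TripleSet G).1)}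

/-- `B(G)`, the subgroup of `Sym(𝕌(G))` generated by the action of `I(G) × I(G)`
and the diagonal action of `Aut(G)`. -/
def BGroup (G : Type*) [Group G] : Subgroup (Equiv.Perm (USet G)) :=
  Subgroup.closure (BGens G)

/-- `A_𝕌(G) = ⟨B(G), τ⟩`. -/
def AUGroup (G : Type*) [Group G] : Subgroup (Equiv.Perm (USet G)) :=
  Subgroup.closure (BGens G ∪ tauGens G)


/-- The subgroup of `G` generated by all `n`-th powers. -/
def powSubgroup (G : Type*) [Group G] (n : ℕ) : Subgroup G :=
  Subgroup.closure (Set.range fun g : G => g ^ n)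

/-- The subgroup of inner automorphisms, `Inn(G)`. -/
def innAut (G : Type*) [Group G] : Subgroup (MulAut G) :=
  (MulAut.conj : G →* MulAut G).range

instance innAut_normal (G : Type*) [Group G] : (innAut G).Normal := by
  constructor
  rintro - ⟨g, rfl⟩ α
  refine ⟨α g, ?_⟩
  ext x
  simp only [MulAut.conj_apply, MulAut.mul_apply, MulAut.inv_def, map_mul, map_inv,
    MulEquiv.apply_symm_apply]

section Presented

open scoped commutatorElement

/-- The two generators of the free group on two letters. -/
def fA : FreeGroup Bool := FreeGroup.of true

def fB : FreeGroup Bool := FreeGroup.of false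

/-- Relations of `M(p,e,i) = ⟨a,b ∣ a^{p^e} = b^{p^e} = 1, [a,b] = a^{p^i}⟩`. -/
def MRels (p e i : ℕ) : Set (FreeGroup Bool) :=
  {fA ^ p ^ e, fB ^ p ^ e, ⁅fA, fB⁆ * (fA ^ p ^ i)⁻¹}

/-- The metacyclic group `M(p,e,i)`. -/
abbrev MGroup (p e i : ℕ) : Type := PresentedGroup (MRels p e i)

def ma (p e i : ℕ) : MGroup p e i := PresentedGroup.of true

def mb (p e i : ℕ) : MGroup p e i := PresentedGroup.of false

/-- Relations of
`H(p,e,i,j,k) = ⟨a,b ∣ a^{p^e} = [b,a]^{p^j} = [b,a,a] = [b,a,b] = 1, b^{p^i} = [b,a]^{p^k}⟩`. -/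
def HRels (p e i j k : ℕ) : Set (FreeGroup Bool) :=
  {fA ^ p ^ e, ⁅fB, fA⁆ ^ p ^ j, ⁅⁅fB, fA⁆, fA⁆, ⁅⁅fB, fA⁆, fB⁆,
    fB ^ p ^ i * (⁅fB, fA⁆ ^ p ^ k)⁻¹}

/-- The group `H(p,e,i,j,k)` of nilpotency class 2. -/
abbrev HGroup (p e i j k : ℕ) : Type := PresentedGroup (HRels p e i j k)

def ha (p e i j k : ℕ) : HGroup p e i j k := PresentedGroup.of true

def hb (p e i j k : ℕ) : HGroup p e i j k := PresentedGroup.of false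

/-- Relations of
`K(p,e,j) = ⟨a,b ∣ a^{p^e} = b^{p^e} = [b,a]^{p^j} = [b,a,b] = [b,a,a] = 1⟩`. -/
def KRels (p e j : ℕ) : Set (FreeGroup Bool) :=
  {fA ^ p ^ e, fB ^ p ^ e, ⁅fB, fA⁆ ^ p ^ j, ⁅⁅fB, fA⁆, fB⁆, ⁅⁅fB, fA⁆, fA⁆}

/-- The group `K(p,e,j)` of nilpotency class 2. -/
abbrev KGroup (p e j : ℕ) : Type := PresentedGroup (KRels p e j)

def ka (p e j : ℕ) : KGroup p e j := PresentedGroup.of true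

def kb (p e j : ℕ) : KGroup p e j := PresentedGroup.of false

end Presented



section CountingAux
open Finset

variable {p : ℕ} [Fact p.Prime]

/-- 2x2 determinant of two vectors in `(ZMod p)²`. -/
def det2 (u v : ZMod p × ZMod p) : ZMod p := u.1 * v.2 - u.2 * v.1

lemma smul_coords (m : ℤ) (v : ZMod p × ZMod p) :
    m • v = ((m : ZMod p) * v.1, (m : ZMod p) * v.2) := by
  ext <;> simp [zsmul_eq_mul]

lemma exists_int_smul (μ : ZMod p) (v : ZMod p × ZMod p) :
    ∃ m : ℤ, m • v = (μ * v.1, μ * v.2) := by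
  refine ⟨(μ.val : ℤ), ?_⟩
  rw [smul_coords]
  push_cast
  simp [ZMod.natCast_val, ZMod.cast_id]

lemma closure_pair_eq_top_iff (x y : Multiplicative (ZMod p × ZMod p)) :
    Subgroup.closure {x, y} = ⊤ ↔ det2 x.toAdd y.toAdd ≠ 0 := by
  constructor
  · intro h hD
    simp only [det2] at hD
    -- find a nonzero functional vanishing on x, y
    obtain ⟨u, v, huv, hx, hy⟩ : ∃ u v : ZMod p, (u ≠ 0 ∨ v ≠ 0) ∧
        u * x.toAdd.1 + v * x.toAdd.2 = 0 ∧ u * y.toAdd.1 + v * y.toAdd.2 = 0 := by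
      by_cases hx0 : x.toAdd = 0
      · by_cases hy0 : y.toAdd = 0
        · exact ⟨1, 0, Or.inl one_ne_zero, by simp [hx0], by simp [hy0]⟩
        · refine ⟨y.toAdd.2, -y.toAdd.1, ?_, by simp [hx0], by ring⟩
          rcases Decidable.em (y.toAdd.2 = 0) with h2 | h2
          · refine Or.inr ?_
            simp only [ne_eq, neg_eq_zero]
            intro h1
            exact hy0 (Prod.ext h1 h2)
          · exact Or.inl h2
      · refine ⟨x.toAdd.2, -x.toAdd.1, ?_, by ring, by linear_combination -hD⟩
        rcases Decidable.em (x.toAdd.2 = 0) with h2 | h2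
        · refine Or.inr ?_
          simp only [ne_eq, neg_eq_zero]
          intro h1
          exact hx0 (Prod.ext h1 h2)
        · exact Or.inl h2
    -- pick a witness where the functional is nonzero
    rcases Decidable.em (u = 0) with hu | hu
    · -- then v ≠ 0, use (0,1)
      have hv : v ≠ 0 := huv.resolve_left (by simp [hu])
      obtain ⟨m, n, hmn⟩ := Subgroup.mem_closure_pair.1
        (h ▸ Subgroup.mem_top (Multiplicative.ofAdd ((0 : ZMod p), (1 : ZMod p))))
      have hadd : m • x.toAdd + n • y.toAdd = ((0 : ZMod p), (1 : ZMod p)) := by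
        have := congrArg Multiplicative.toAdd hmn
        simpa using this
      have h1 : (m : ZMod p) * x.toAdd.1 + (n : ZMod p) * y.toAdd.1 = 0 := by
        have := congrArg Prod.fst hadd
        simpa [smul_coords] using this
      have h2 : (m : ZMod p) * x.toAdd.2 + (n : ZMod p) * y.toAdd.2 = 1 := by
        have := congrArg Prod.snd hadd
        simpa [smul_coords] using this
      exact hv (by linear_combination (m : ZMod p) * hx + (n : ZMod p) * hy - u * h1 - v * h2)
    · obtain ⟨m, n, hmn⟩ := Subgroup.mem_closure_pair.1
        (h ▸ Subgroup.mem_top (Multiplicative.ofAdd ((1 : ZMod p), (0 : ZMod p))))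
      have hadd : m • x.toAdd + n • y.toAdd = ((1 : ZMod p), (0 : ZMod p)) := by
        have := congrArg Multiplicative.toAdd hmn
        simpa using this
      have h1 : (m : ZMod p) * x.toAdd.1 + (n : ZMod p) * y.toAdd.1 = 1 := by
        have := congrArg Prod.fst hadd
        simpa [smul_coords] using this
      have h2 : (m : ZMod p) * x.toAdd.2 + (n : ZMod p) * y.toAdd.2 = 0 := by
        have := congrArg Prod.snd hadd
        simpa [smul_coords] using this
      exact hu (by linear_combination (m : ZMod p) * hx + (n : ZMod p) * hy - u * h1 - v * h2)
  · intro hD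
    rw [eq_top_iff']
    intro z
    rw [Subgroup.mem_closure_pair]
    obtain ⟨m, hm⟩ := exists_int_smul
      ((z.toAdd.1 * y.toAdd.2 - z.toAdd.2 * y.toAdd.1) / det2 x.toAdd y.toAdd) x.toAdd
    obtain ⟨n, hn⟩ := exists_int_smul
      ((x.toAdd.1 * z.toAdd.2 - x.toAdd.2 * z.toAdd.1) / det2 x.toAdd y.toAdd) y.toAdd
    refine ⟨m, n, ?_⟩
    have : m • x.toAdd + n • y.toAdd = z.toAdd := by
      rw [hm, hn]
      have hd : det2 x.toAdd y.toAdd = x.toAdd.1 * y.toAdd.2 - x.toAdd.2 * y.toAdd.1 := rfl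
      ext
      · show _ + _ = z.toAdd.1
        rw [hd] at hD ⊢
        dsimp only
        rw [div_mul_eq_mul_div, div_mul_eq_mul_div, ← add_div, div_eq_iff hD]
        ring
      · show _ + _ = z.toAdd.2
        rw [hd] at hD ⊢
        dsimp only
        rw [div_mul_eq_mul_div, div_mul_eq_mul_div, ← add_div, div_eq_iff hD]
        ring
    apply Multiplicative.toAdd.injective
    simpa using this

lemma mem_zpowers_iff' (x z : Multiplicative (ZMod p × ZMod p)) :
    z ∈ Subgroup.zpowers x ↔ ∃ μ : ZMod p, z.toAdd = (μ * x.toAdd.1, μ * x.toAdd.2) := by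
  rw [Subgroup.mem_zpowers_iff]
  constructor
  · rintro ⟨k, rfl⟩
    exact ⟨(k : ZMod p), by rw [toAdd_zpow, smul_coords]⟩
  · rintro ⟨μ, hμ⟩
    obtain ⟨m, hm⟩ := exists_int_smul μ x.toAdd
    refine ⟨m, ?_⟩
    apply Multiplicative.toAdd.injective
    simp [hm, hμ]

/-- nonzero consequences of a nonzero determinant -/
lemma det2_ne_zero_consequences {u v : ZMod p × ZMod p} (h : det2 u v ≠ 0) :
    u ≠ 0 ∧ v ≠ 0 ∧ u + v ≠ 0 := by
  refine ⟨?_, ?_, ?_⟩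
  · rintro rfl; exact h (by simp [det2])
  · rintro rfl; exact h (by simp [det2])
  · intro h0
    have : v = -u := by
      have := congrArg (fun w => w - u) h0
      simpa [add_sub_cancel_left] using this
    exact h (by simp [det2, this]; ring)

lemma scalar_eq_zero {μ : ZMod p} {u : ZMod p × ZMod p} (hu : u ≠ 0)
    (h1 : μ * u.1 = 0) (h2 : μ * u.2 = 0) : μ = 0 := by
  by_contra hμ
  exact hu (Prod.ext (by
    rcases mul_eq_zero.1 h1 with h | h; exact absurd h hμ; exact h) (by
    rcases mul_eq_zero.1 h2 with h | h; exact absurd h hμ; exact h))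

/-- trivial intersection of the two "lines" iff the determinant is nonzero -/
lemma zpowers_inter_iff (u v : Multiplicative (ZMod p × ZMod p))
    (hu : u.toAdd ≠ 0) (hv : v.toAdd ≠ 0) :
    (∀ w, w ∈ Subgroup.zpowers u → w ∈ Subgroup.zpowers v → w = 1) ↔
      det2 u.toAdd v.toAdd ≠ 0 := by
  constructor
  · intro H hD
    simp only [det2] at hD
    -- v is proportional to u; build a common nonzero element
    rcases Decidable.em (u.toAdd.1 = 0) with h1 | h1
    · have h2 : u.toAdd.2 ≠ 0 := fun h2 => hu (Prod.ext h1 h2)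
      have hlam : v.toAdd = ((v.toAdd.2 / u.toAdd.2) * u.toAdd.1,
          (v.toAdd.2 / u.toAdd.2) * u.toAdd.2) := by
        have hv1 : v.toAdd.1 = 0 := by
          have : u.toAdd.2 * v.toAdd.1 = 0 := by linear_combination v.toAdd.2 * h1 - hD
          rcases mul_eq_zero.1 this with h | h; exact absurd h h2; exact h
        ext
        · simp [hv1, h1]
        · field_simp
      have hvv : v ∈ Subgroup.zpowers u := (mem_zpowers_iff' u v).2 ⟨_, hlam⟩
      have := H v hvv (Subgroup.mem_zpowers v)
      exact hv (by simpa using congrArg Multiplicative.toAdd this)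
    · have hlam : v.toAdd = ((v.toAdd.1 / u.toAdd.1) * u.toAdd.1,
          (v.toAdd.1 / u.toAdd.1) * u.toAdd.2) := by
        ext
        · field_simp
        · field_simp
          linear_combination hD
      have hvv : v ∈ Subgroup.zpowers u := (mem_zpowers_iff' u v).2 ⟨_, hlam⟩
      have := H v hvv (Subgroup.mem_zpowers v)
      exact hv (by simpa using congrArg Multiplicative.toAdd this)
  · intro hD w hwu hwv
    obtain ⟨μ, hμ⟩ := (mem_zpowers_iff' u w).1 hwu
    obtain ⟨ν, hν⟩ := (mem_zpowers_iff' v w).1 hwv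
    have e1 : μ * u.toAdd.1 = ν * v.toAdd.1 := by
      simpa using congrArg Prod.fst (hμ.symm.trans hν)
    have e2 : μ * u.toAdd.2 = ν * v.toAdd.2 := by
      simpa using congrArg Prod.snd (hμ.symm.trans hν)
    have hμ0 : μ = 0 := by
      have key : det2 u.toAdd v.toAdd * μ = 0 := by
        simp only [det2]
        linear_combination v.toAdd.2 * e1 - v.toAdd.1 * e2
      rcases mul_eq_zero.1 key with h | h; exact absurd h hD; exact h
    apply Multiplicative.toAdd.injective
    simp [hμ, hμ0]

lemma sigmaSet_comm {G : Type*} [CommGroup G] (x y : G) :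
    sigmaSet x y = (Subgroup.zpowers x : Set G) ∪ (Subgroup.zpowers y : Set G) ∪
      (Subgroup.zpowers (x * y) : Set G) := by
  unfold sigmaSet
  have himg : ∀ (g : G) (A : Set G), (fun h => g * h * g⁻¹) '' A = A := by
    intro g A
    rw [show (fun h : G => g * h * g⁻¹) = id from funext fun h => by
      simp [mul_comm g h, mul_assoc], Set.image_id]
  simp only [himg, Set.iUnion_const]


lemma sigma_inter_iff (x₁ y₁ x₂ y₂ : Multiplicative (ZMod p × ZMod p))
    (h1 : det2 x₁.toAdd y₁.toAdd ≠ 0) (h2 : det2 x₂.toAdd y₂.toAdd ≠ 0) :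
    sigmaSet x₁ y₁ ∩ sigmaSet x₂ y₂ = {1} ↔
      (det2 x₁.toAdd x₂.toAdd ≠ 0 ∧ det2 x₁.toAdd y₂.toAdd ≠ 0 ∧
        det2 x₁.toAdd (x₂.toAdd + y₂.toAdd) ≠ 0 ∧
       det2 y₁.toAdd x₂.toAdd ≠ 0 ∧ det2 y₁.toAdd y₂.toAdd ≠ 0 ∧
        det2 y₁.toAdd (x₂.toAdd + y₂.toAdd) ≠ 0 ∧
       det2 (x₁.toAdd + y₁.toAdd) x₂.toAdd ≠ 0 ∧
        det2 (x₁.toAdd + y₁.toAdd) y₂.toAdd ≠ 0 ∧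
        det2 (x₁.toAdd + y₁.toAdd) (x₂.toAdd + y₂.toAdd) ≠ 0) := by
  obtain ⟨hx1, hy1, hxy1⟩ := det2_ne_zero_consequences h1
  obtain ⟨hx2, hy2, hxy2⟩ := det2_ne_zero_consequences h2
  have hm1 : (x₁ * y₁).toAdd = x₁.toAdd + y₁.toAdd := by simp
  have hm2 : (x₂ * y₂).toAdd = x₂.toAdd + y₂.toAdd := by simp
  rw [sigmaSet_comm, sigmaSet_comm, Set.eq_singleton_iff_unique_mem]
  simp only [Set.mem_inter_iff, Set.mem_union, SetLike.mem_coe]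
  constructor
  · rintro ⟨-, H⟩
    have key : ∀ (u v : Multiplicative (ZMod p × ZMod p)),
        (u = x₁ ∨ u = y₁ ∨ u = x₁ * y₁) → (v = x₂ ∨ v = y₂ ∨ v = x₂ * y₂) →
        (∀ w, w ∈ Subgroup.zpowers u → w ∈ Subgroup.zpowers v → w = 1) := by
      intro u v hu hv w hwu hwv
      apply H
      constructor
      · rcases hu with rfl | rfl | rfl
        · exact Or.inl (Or.inl hwu)
        · exact Or.inl (Or.inr hwu)
        · exact Or.inr hwu
      · rcases hv with rfl | rfl | rfl
        · exact Or.inl (Or.inl hwv)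
        · exact Or.inl (Or.inr hwv)
        · exact Or.inr hwv
    refine ⟨?_, ?_, ?_, ?_, ?_, ?_, ?_, ?_, ?_⟩
    · exact (zpowers_inter_iff _ _ hx1 hx2).1 (key _ _ (Or.inl rfl) (Or.inl rfl))
    · exact (zpowers_inter_iff _ _ hx1 hy2).1 (key _ _ (Or.inl rfl) (Or.inr (Or.inl rfl)))
    · exact hm2 ▸ (zpowers_inter_iff _ _ hx1 (hm2 ▸ hxy2)).1
        (key _ _ (Or.inl rfl) (Or.inr (Or.inr rfl)))
    · exact (zpowers_inter_iff _ _ hy1 hx2).1 (key _ _ (Or.inr (Or.inl rfl)) (Or.inl rfl))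
    · exact (zpowers_inter_iff _ _ hy1 hy2).1
        (key _ _ (Or.inr (Or.inl rfl)) (Or.inr (Or.inl rfl)))
    · exact hm2 ▸ (zpowers_inter_iff _ _ hy1 (hm2 ▸ hxy2)).1
        (key _ _ (Or.inr (Or.inl rfl)) (Or.inr (Or.inr rfl)))
    · exact hm1 ▸ (zpowers_inter_iff _ _ (hm1 ▸ hxy1) hx2).1
        (key _ _ (Or.inr (Or.inr rfl)) (Or.inl rfl))
    · exact hm1 ▸ (zpowers_inter_iff _ _ (hm1 ▸ hxy1) hy2).1
        (key _ _ (Or.inr (Or.inr rfl)) (Or.inr (Or.inl rfl)))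
    · exact hm1 ▸ hm2 ▸ (zpowers_inter_iff _ _ (hm1 ▸ hxy1) (hm2 ▸ hxy2)).1
        (key _ _ (Or.inr (Or.inr rfl)) (Or.inr (Or.inr rfl)))
  · rintro ⟨c1, c2, c3, c4, c5, c6, c7, c8, c9⟩
    refine ⟨⟨Or.inl (Or.inl (one_mem _)), Or.inl (Or.inl (one_mem _))⟩, ?_⟩
    rintro w ⟨(hw1 | hw1) | hw1, (hw2 | hw2) | hw2⟩
    · exact (zpowers_inter_iff _ _ hx1 hx2).2 c1 w hw1 hw2
    · exact (zpowers_inter_iff _ _ hx1 hy2).2 c2 w hw1 hw2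
    · exact (zpowers_inter_iff _ _ hx1 (hm2 ▸ hxy2)).2 (hm2 ▸ c3) w hw1 hw2
    · exact (zpowers_inter_iff _ _ hy1 hx2).2 c4 w hw1 hw2
    · exact (zpowers_inter_iff _ _ hy1 hy2).2 c5 w hw1 hw2
    · exact (zpowers_inter_iff _ _ hy1 (hm2 ▸ hxy2)).2 (hm2 ▸ c6) w hw1 hw2
    · exact (zpowers_inter_iff _ _ (hm1 ▸ hxy1) hx2).2 (hm1 ▸ c7) w hw1 hw2
    · exact (zpowers_inter_iff _ _ (hm1 ▸ hxy1) hy2).2 (hm1 ▸ c8) w hw1 hw2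
    · exact (zpowers_inter_iff _ _ (hm1 ▸ hxy1) (hm2 ▸ hxy2)).2 (hm1 ▸ hm2 ▸ c9) w hw1 hw2

/-- the `good` predicate on quadruples of vectors -/
def good (q : ((ZMod p × ZMod p) × (ZMod p × ZMod p)) × ((ZMod p × ZMod p) × (ZMod p × ZMod p))) :
    Prop :=
  det2 q.1.1 q.1.2 ≠ 0 ∧ det2 q.2.1 q.2.2 ≠ 0 ∧
  (det2 q.1.1 q.2.1 ≠ 0 ∧ det2 q.1.1 q.2.2 ≠ 0 ∧ det2 q.1.1 (q.2.1 + q.2.2) ≠ 0 ∧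
   det2 q.1.2 q.2.1 ≠ 0 ∧ det2 q.1.2 q.2.2 ≠ 0 ∧ det2 q.1.2 (q.2.1 + q.2.2) ≠ 0 ∧
   det2 (q.1.1 + q.1.2) q.2.1 ≠ 0 ∧ det2 (q.1.1 + q.1.2) q.2.2 ≠ 0 ∧
   det2 (q.1.1 + q.1.2) (q.2.1 + q.2.2) ≠ 0)

abbrev Gp (p : ℕ) := Multiplicative (ZMod p × ZMod p)

/-- the packaging map -/
def FF (q : ((ZMod p × ZMod p) × (ZMod p × ZMod p)) × ((ZMod p × ZMod p) × (ZMod p × ZMod p))) :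
    (Gp p × Gp p × Gp p) × (Gp p × Gp p × Gp p) :=
  ((Multiplicative.ofAdd q.1.1, Multiplicative.ofAdd q.1.2,
      (Multiplicative.ofAdd q.1.1 * Multiplicative.ofAdd q.1.2)⁻¹),
   (Multiplicative.ofAdd q.2.1, Multiplicative.ofAdd q.2.2,
      (Multiplicative.ofAdd q.2.1 * Multiplicative.ofAdd q.2.2)⁻¹))

lemma FF_injective : Function.Injective (FF (p := p)) := by
  have : Function.LeftInverse
      (fun t : (Gp p × Gp p × Gp p) × (Gp p × Gp p × Gp p) =>
        ((t.1.1.toAdd, t.1.2.1.toAdd), (t.2.1.toAdd, t.2.2.1.toAdd))) (FF (p := p)) :=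
    fun q => rfl
  exact this.injective

lemma beauville_eq_image :
    beauvilleStructures (Multiplicative (ZMod p × ZMod p)) = FF '' {q | good q} := by
  ext t
  simp only [Set.mem_image, Set.mem_setOf_eq]
  constructor
  · rintro ⟨x₁, y₁, x₂, y₂, rfl, hg1, hg2, hsig⟩
    rw [closure_pair_eq_top_iff] at hg1 hg2
    refine ⟨((x₁.toAdd, y₁.toAdd), (x₂.toAdd, y₂.toAdd)), ?_, rfl⟩
    exact ⟨hg1, hg2, (sigma_inter_iff x₁ y₁ x₂ y₂ hg1 hg2).1 hsig⟩
  · rintro ⟨q, hq, rfl⟩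
    obtain ⟨hg1, hg2, hrest⟩ := hq
    refine ⟨Multiplicative.ofAdd q.1.1, Multiplicative.ofAdd q.1.2,
      Multiplicative.ofAdd q.2.1, Multiplicative.ofAdd q.2.2, rfl, ?_, ?_, ?_⟩
    · exact (closure_pair_eq_top_iff _ _).2 hg1
    · exact (closure_pair_eq_top_iff _ _).2 hg2
    · exact (sigma_inter_iff _ _ _ _ hg1 hg2).2 hrest

def goodC (q : (ZMod p × ZMod p) × (ZMod p × ZMod p)) : Prop :=
  q.1.1 * q.2.2 - q.1.2 * q.2.1 ≠ 0 ∧ q.1.2 ≠ 0 ∧ q.2.2 ≠ 0 ∧ q.1.2 + q.2.2 ≠ 0 ∧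
  q.1.1 ≠ 0 ∧ q.2.1 ≠ 0 ∧ q.1.1 + q.2.1 ≠ 0 ∧
  q.1.2 - q.1.1 ≠ 0 ∧ q.2.2 - q.2.1 ≠ 0 ∧ (q.1.2 + q.2.2) - (q.1.1 + q.2.1) ≠ 0

/-- coordinates w.r.t. a basis -/
def psi (x₁ y₁ : ZMod p × ZMod p) (hD : det2 x₁ y₁ ≠ 0) : (ZMod p × ZMod p) ≃ (ZMod p × ZMod p) where
  toFun ab := (ab.1 * x₁.1 + ab.2 * y₁.1, ab.1 * x₁.2 + ab.2 * y₁.2)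
  invFun w := ((w.1 * y₁.2 - w.2 * y₁.1) / (x₁.1 * y₁.2 - x₁.2 * y₁.1),
               (x₁.1 * w.2 - x₁.2 * w.1) / (x₁.1 * y₁.2 - x₁.2 * y₁.1))
  left_inv := by
    have hD' : x₁.1 * y₁.2 - x₁.2 * y₁.1 ≠ 0 := hD
    rintro ⟨a, b⟩
    ext
    · show _ / _ = a
      rw [div_eq_iff hD']
      ring
    · show _ / _ = b
      rw [div_eq_iff hD']
      ring
  right_inv := by
    have hD' : x₁.1 * y₁.2 - x₁.2 * y₁.1 ≠ 0 := hD
    rintro ⟨w1, w2⟩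
    ext
    · show _ * _ + _ * _ = w1
      rw [div_mul_eq_mul_div, div_mul_eq_mul_div, ← add_div, div_eq_iff hD']
      ring
    · show _ * _ + _ * _ = w2
      rw [div_mul_eq_mul_div, div_mul_eq_mul_div, ← add_div, div_eq_iff hD']
      ring

lemma psi_apply (x₁ y₁ : ZMod p × ZMod p) (hD : det2 x₁ y₁ ≠ 0) (u : ZMod p × ZMod p) :
    psi x₁ y₁ hD u = (u.1 * x₁.1 + u.2 * y₁.1, u.1 * x₁.2 + u.2 * y₁.2) := rfl

lemma det2_psi (x₁ y₁ : ZMod p × ZMod p) (hD : det2 x₁ y₁ ≠ 0) (u v : ZMod p × ZMod p) :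
    det2 (psi x₁ y₁ hD u) (psi x₁ y₁ hD v) = (u.1 * v.2 - u.2 * v.1) * det2 x₁ y₁ := by
  simp only [det2, psi_apply]
  ring

lemma det2_left_psi (x₁ y₁ : ZMod p × ZMod p) (hD : det2 x₁ y₁ ≠ 0) (a b : ZMod p)
    (v : ZMod p × ZMod p) :
    det2 (a * x₁.1 + b * y₁.1, a * x₁.2 + b * y₁.2) (psi x₁ y₁ hD v) =
      (a * v.2 - b * v.1) * det2 x₁ y₁ := by
  simp only [det2, psi_apply]
  ring

lemma det2_x_psi (x₁ y₁ : ZMod p × ZMod p) (hD : det2 x₁ y₁ ≠ 0) (u : ZMod p × ZMod p) :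
    det2 x₁ (psi x₁ y₁ hD u) = u.2 * det2 x₁ y₁ := by
  simp only [det2, psi_apply]; ring

lemma det2_y_psi (x₁ y₁ : ZMod p × ZMod p) (hD : det2 x₁ y₁ ≠ 0) (u : ZMod p × ZMod p) :
    det2 y₁ (psi x₁ y₁ hD u) = -u.1 * det2 x₁ y₁ := by
  simp only [det2, psi_apply]; ring

lemma det2_xy_psi (x₁ y₁ : ZMod p × ZMod p) (hD : det2 x₁ y₁ ≠ 0) (u : ZMod p × ZMod p) :
    det2 (x₁ + y₁) (psi x₁ y₁ hD u) = (u.2 - u.1) * det2 x₁ y₁ := by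
  simp only [det2, psi_apply, Prod.fst_add, Prod.snd_add]; ring

lemma psi_add (x₁ y₁ : ZMod p × ZMod p) (hD : det2 x₁ y₁ ≠ 0) (u v : ZMod p × ZMod p) :
    psi x₁ y₁ hD u + psi x₁ y₁ hD v = psi x₁ y₁ hD (u + v) := by
  ext <;> (simp only [psi_apply, Prod.fst_add, Prod.snd_add]; ring)

lemma good_psi_iff (x₁ y₁ : ZMod p × ZMod p) (hD : det2 x₁ y₁ ≠ 0)
    (q : (ZMod p × ZMod p) × (ZMod p × ZMod p)) :
    good ((x₁, y₁), (psi x₁ y₁ hD q.1, psi x₁ y₁ hD q.2)) ↔ goodC q := by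
  have hmul : ∀ k : ZMod p, k * det2 x₁ y₁ ≠ 0 ↔ k ≠ 0 := fun k => by
    simp [mul_eq_zero, hD]
  unfold good goodC
  simp only [psi_add, det2_psi, det2_x_psi, det2_y_psi, det2_xy_psi, hmul, neg_ne_zero,
    Prod.fst_add, Prod.snd_add]
  rw [and_iff_right hD]

instance : DecidablePred (goodC (p := p)) := fun q => by unfold goodC; infer_instance

lemma nat_card_prod_subtype {α β : Type*} [Fintype α] [Fintype β] (P : α × β → Prop) :
    Nat.card {q : α × β // P q} = ∑ a : α, Nat.card {b : β // P (a, b)} := by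
  classical
  rw [Nat.card_congr (Equiv.subtypeProdEquivSigmaSubtype (fun (a : α) (b : β) => P (a, b)))]
  rw [Nat.card_eq_fintype_card, Fintype.card_sigma]
  exact Finset.sum_congr rfl fun a _ => (Nat.card_eq_fintype_card).symm

lemma nat_card_subtype_eq_zero {α : Type*} {P : α → Prop} (h : ∀ a, ¬ P a) :
    Nat.card {a : α // P a} = 0 := by
  have : IsEmpty {a : α // P a} := ⟨fun x => h x.1 x.2⟩
  exact Nat.card_of_isEmpty

lemma nat_card_subtype_filter {α : Type*} [Fintype α] (P : α → Prop) [DecidablePred P] :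
    Nat.card {a : α // P a} = (univ.filter P).card := by
  rw [Nat.card_eq_fintype_card, Fintype.card_subtype]

section Inner

variable {a b : ZMod p} (ha : a ≠ 0) (hb : b ≠ 0) (hab : b - a ≠ 0)

/-- forbidden values for `d` -/
def Fd (a b c : ZMod p) : Finset (ZMod p) := {0, -b, c, a + c - b, b * c / a}

include ha hb hab

lemma filter_d (c : ZMod p) (hc : c ≠ 0) (hac : a + c ≠ 0) :
    (univ.filter fun d => goodC ((a, b), (c, d))).card = p - (Fd a b c).card := by
  have key : (univ.filter fun d => goodC ((a, b), (c, d))) = univ \ Fd a b c := by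
    ext d
    rw [Finset.mem_filter]
    simp only [goodC, Fd, Finset.mem_filter, Finset.mem_univ, true_and, Finset.mem_sdiff,
      Finset.mem_insert, Finset.mem_singleton]
    constructor
    · rintro ⟨h1, -, h3, h4, -, -, -, -, h9, h10⟩
      push_neg
      refine ⟨h3, ?_, ?_, ?_, ?_⟩
      · intro hd; exact h4 (by rw [hd]; ring)
      · intro hd; exact h9 (by rw [hd]; ring)
      · intro hd; exact h10 (by rw [hd]; ring)
      · intro hd; apply h1; rw [hd]; field_simp; ring
    · intro h
      push_neg at h
      obtain ⟨hd0, hdb, hdc, hdacb, hdiv⟩ := h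
      refine ⟨?_, hb, hd0, ?_, ha, hc, hac, hab, sub_ne_zero.2 hdc, ?_⟩
      · intro h0
        apply hdiv
        rw [eq_div_iff ha]
        linear_combination h0
      · intro h0; exact hdb (by linear_combination h0)
      · intro h0; exact hdacb (by linear_combination h0)
  rw [key, Finset.card_sdiff_of_subset (Finset.subset_univ _), Finset.card_univ, ZMod.card]

omit hab in
lemma dq4 {c : ZMod p} (hc : c ≠ 0) : (0 : ZMod p) ≠ b * c / a := by
  intro h
  rcases div_eq_zero_iff.1 h.symm with h' | h'
  · rcases mul_eq_zero.1 h' with h'' | h''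
    · exact hb h''
    · exact hc h''
  · exact ha h'

omit hb hab in
lemma dq7 {c : ZMod p} (hb : b ≠ 0) (hac : a + c ≠ 0) : (-b : ZMod p) ≠ b * c / a := by
  intro h
  rw [eq_div_iff ha] at h
  have : b * (a + c) = 0 := by linear_combination -h
  rcases mul_eq_zero.1 this with h' | h'
  · exact hb h'
  · exact hac h'

omit hb in
lemma dq9 {c : ZMod p} (hc : c ≠ 0) : c ≠ b * c / a := by
  intro h
  rw [eq_div_iff ha] at h
  have : c * (a - b) = 0 := by linear_combination h
  rcases mul_eq_zero.1 this with h' | h'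
  · exact hc h'
  · exact hab (by linear_combination -h')

omit hb in
lemma dq10 {c : ZMod p} (hac : a + c ≠ 0) : a + c - b ≠ b * c / a := by
  intro h
  rw [eq_div_iff ha] at h
  have : (a - b) * (a + c) = 0 := by linear_combination h
  rcases mul_eq_zero.1 this with h' | h'
  · exact hab (by linear_combination -h')
  · exact hac h'

lemma cardF_generic {c : ZMod p} (hc : c ≠ 0) (hac : a + c ≠ 0)
    (h1 : c ≠ b - a) (h2 : c ≠ -b) : (Fd a b c).card = 5 := by
  have m1 : (0 : ZMod p) ∉ ({-b, c, a + c - b, b * c / a} : Finset (ZMod p)) := by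
    simp only [mem_insert, mem_singleton]
    push_neg
    refine ⟨fun h => hb (by linear_combination h), hc.symm, ?_, dq4 ha hb hc⟩
    · intro h; exact h1 (by linear_combination -h)
  have m2 : (-b : ZMod p) ∉ ({c, a + c - b, b * c / a} : Finset (ZMod p)) := by
    simp only [mem_insert, mem_singleton]
    push_neg
    refine ⟨fun h => h2 h.symm, ?_, dq7 ha hb hac⟩
    · intro h; exact hac (by linear_combination -h)
  have m3 : c ∉ ({a + c - b, b * c / a} : Finset (ZMod p)) := by
    simp only [mem_insert, mem_singleton]
    push_neg
    refine ⟨?_, dq9 ha hab hc⟩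
    · intro h; exact hab (by linear_combination h)
  have m4 : (a + c - b : ZMod p) ∉ ({b * c / a} : Finset (ZMod p)) := by
    simp only [mem_singleton]
    exact dq10 (b := b) ha hab hac
  unfold Fd
  rw [card_insert_of_notMem m1, card_insert_of_notMem m2, card_insert_of_notMem m3,
    card_insert_of_notMem m4, card_singleton]

lemma cardF_s1 (hss : b - a ≠ -b) : (Fd a b (b - a)).card = 4 := by
  have h0 : a + (b - a) - b = 0 := by ring
  have hFd : Fd a b (b - a) = ({0, -b, b - a, b * (b - a) / a} : Finset (ZMod p)) := by
    unfold Fd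
    rw [h0]
    ext x
    simp only [mem_insert, mem_singleton]
    tauto
  rw [hFd]
  have hba : a + (b - a) ≠ 0 := by
    intro h; exact hb (by linear_combination h)
  have m1 : (0 : ZMod p) ∉ ({-b, b - a, b * (b - a) / a} : Finset (ZMod p)) := by
    simp only [mem_insert, mem_singleton]
    push_neg
    exact ⟨fun h => hb (by linear_combination h), hab.symm, dq4 ha hb hab⟩
  have m2 : (-b : ZMod p) ∉ ({b - a, b * (b - a) / a} : Finset (ZMod p)) := by
    simp only [mem_insert, mem_singleton]
    push_neg
    exact ⟨fun h => hss h.symm, dq7 ha hb hba⟩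
  have m3 : (b - a : ZMod p) ∉ ({b * (b - a) / a} : Finset (ZMod p)) := by
    simp only [mem_singleton]
    exact dq9 ha hab hab
  rw [card_insert_of_notMem m1, card_insert_of_notMem m2, card_insert_of_notMem m3,
    card_singleton]

lemma cardF_s2 (hss : b - a ≠ -b) : (Fd a b (-b)).card = 4 := by
  have hFd : Fd a b (-b) = ({0, -b, a + -b - b, b * -b / a} : Finset (ZMod p)) := by
    unfold Fd
    ext x
    simp only [mem_insert, mem_singleton]
    tauto
  rw [hFd]
  have hacb : a + -b ≠ 0 := by
    intro h; exact hab (by linear_combination -h)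
  have m1 : (0 : ZMod p) ∉ ({-b, a + -b - b, b * -b / a} : Finset (ZMod p)) := by
    simp only [mem_insert, mem_singleton]
    push_neg
    refine ⟨fun h => hb (by linear_combination h), ?_, ?_⟩
    · intro h; exact hss (by linear_combination h)
    · have := dq4 ha hb (c := -b) (by simpa using hb)
      simpa using this
  have m2 : (-b : ZMod p) ∉ ({a + -b - b, b * -b / a} : Finset (ZMod p)) := by
    simp only [mem_insert, mem_singleton]
    push_neg
    refine ⟨?_, dq7 ha hb hacb⟩
    · intro h; exact hacb (by linear_combination -h)
  have m3 : (a + -b - b : ZMod p) ∉ ({b * -b / a} : Finset (ZMod p)) := by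
    simp only [mem_singleton]
    exact dq10 (b := b) ha hab hacb
  rw [card_insert_of_notMem m1, card_insert_of_notMem m2, card_insert_of_notMem m3,
    card_singleton]

lemma cardF_both (hss : b - a = -b) : (Fd a b (-b)).card = 3 := by
  have h0 : a + -b - b = 0 := by linear_combination -hss
  have hFd : Fd a b (-b) = ({0, -b, b * -b / a} : Finset (ZMod p)) := by
    unfold Fd
    rw [h0]
    ext x
    simp only [mem_insert, mem_singleton]
    tauto
  rw [hFd]
  have m1 : (0 : ZMod p) ∉ ({-b, b * -b / a} : Finset (ZMod p)) := by
    simp only [mem_insert, mem_singleton]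
    push_neg
    refine ⟨fun h => hb (by linear_combination h), ?_⟩
    · have := dq4 ha hb (c := -b) (by simpa using hb)
      simpa using this
  have m2 : (-b : ZMod p) ∉ ({b * -b / a} : Finset (ZMod p)) := by
    simp only [mem_singleton]
    refine dq7 ha hb ?_
    intro h; exact hab (by linear_combination -h)
  rw [card_insert_of_notMem m1, card_insert_of_notMem m2, card_singleton]

end Inner

section Sums
variable {a b : ZMod p}

lemma card_goodCD (hp5 : 5 ≤ p) (ha : a ≠ 0) (hb : b ≠ 0) (hab : b - a ≠ 0) :
    Nat.card {cd : ZMod p × ZMod p // goodC ((a, b), cd)} = (p - 3) * (p - 4) := by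
  classical
  rw [nat_card_prod_subtype]
  set A : Finset (ZMod p) := univ \ ({0, -a} : Finset (ZMod p)) with hA
  have hmemA : ∀ c : ZMod p, c ∈ A ↔ (c ≠ 0 ∧ a + c ≠ 0) := by
    intro c
    simp only [hA, mem_sdiff, mem_univ, true_and, mem_insert, mem_singleton]
    constructor
    · intro h
      push_neg at h
      exact ⟨h.1, fun h0 => h.2 (by linear_combination h0)⟩
    · intro h
      push_neg
      exact ⟨h.1, fun h0 => h.2 (by rw [h0]; ring)⟩
  have hfib : ∀ c : ZMod p, Nat.card {d : ZMod p // goodC ((a, b), (c, d))} =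
      if c ∈ A then p - (Fd a b c).card else 0 := by
    intro c
    by_cases hcA : c ∈ A
    · rw [if_pos hcA, nat_card_subtype_filter]
      exact filter_d ha hb hab c ((hmemA c).1 hcA).1 ((hmemA c).1 hcA).2
    · rw [if_neg hcA]
      apply nat_card_subtype_eq_zero
      intro d hd
      rcases Decidable.em (c = 0) with h | h
      · exact hd.2.2.2.2.2.1 h
      · exact hcA ((hmemA c).2 ⟨h, fun h0 => hd.2.2.2.2.2.2.1 h0⟩)
  rw [Finset.sum_congr rfl (fun c _ => hfib c), Finset.sum_ite_mem, Finset.univ_inter]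
  -- card of A
  have h0a : (0 : ZMod p) ∉ ({-a} : Finset (ZMod p)) := by
    simp only [mem_singleton]
    exact fun h => ha (by linear_combination h)
  have hcardA : A.card = p - 2 := by
    rw [hA, Finset.card_sdiff_of_subset (Finset.subset_univ _), Finset.card_univ, ZMod.card,
      card_insert_of_notMem h0a, card_singleton]
  by_cases hss : b - a = -b
  · -- single special point -b
    have hSA : ({-b} : Finset (ZMod p)) ⊆ A := by
      intro x hx
      rw [mem_singleton] at hx
      subst hx
      exact (hmemA _).2 ⟨by simpa using hb, fun h0 => hab (by linear_combination -h0)⟩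
    rw [← Finset.sum_sdiff hSA]
    have hgen : ∑ c ∈ A \ {-b}, (p - (Fd a b c).card) = ((p - 2) - 1) * (p - 5) := by
      have := Finset.sum_eq_card_nsmul (s := A \ ({-b} : Finset (ZMod p)))
        (f := fun c => p - (Fd a b c).card) (fun c hc => by
          show p - (Fd a b c).card = p - 5
          rw [cardF_generic ha hb hab ((hmemA c).1 (mem_sdiff.1 hc).1).1
            ((hmemA c).1 (mem_sdiff.1 hc).1).2
            (fun h => (by simpa [h, hss] using (mem_sdiff.1 hc).2 : False))
            (fun h => (by simpa [h] using (mem_sdiff.1 hc).2 : False))])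
      rw [this, smul_eq_mul, Finset.card_sdiff_of_subset hSA, hcardA, card_singleton]
    rw [hgen, Finset.sum_singleton, cardF_both ha hb hab hss]
    obtain ⟨q, rfl⟩ : ∃ q, p = q + 5 := ⟨p - 5, by omega⟩
    have e1 : q + 5 - 2 - 1 = q + 2 := by omega
    have e2 : q + 5 - 5 = q := by omega
    have e3 : q + 5 - 3 = q + 2 := by omega
    have e4 : q + 5 - 4 = q + 1 := by omega
    rw [e1, e2, e3, e4]
    ring
  · -- two special points b - a and -b
    have hSA : ({b - a, -b} : Finset (ZMod p)) ⊆ A := by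
      intro x hx
      rw [mem_insert, mem_singleton] at hx
      rcases hx with rfl | rfl
      · exact (hmemA _).2 ⟨hab, fun h0 => hb (by linear_combination h0)⟩
      · exact (hmemA _).2 ⟨by simpa using hb, fun h0 => hab (by linear_combination -h0)⟩
    rw [← Finset.sum_sdiff hSA]
    have hgen : ∑ c ∈ A \ {b - a, -b}, (p - (Fd a b c).card) = ((p - 2) - 2) * (p - 5) := by
      have := Finset.sum_eq_card_nsmul (s := A \ ({b - a, -b} : Finset (ZMod p)))
        (f := fun c => p - (Fd a b c).card) (fun c hc => by
          show p - (Fd a b c).card = p - 5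
          have hnot := (mem_sdiff.1 hc).2
          rw [mem_insert, mem_singleton] at hnot
          push_neg at hnot
          rw [cardF_generic ha hb hab ((hmemA c).1 (mem_sdiff.1 hc).1).1
            ((hmemA c).1 (mem_sdiff.1 hc).1).2 hnot.1 hnot.2])
      rw [this, smul_eq_mul, Finset.card_sdiff_of_subset hSA, hcardA,
        card_insert_of_notMem (by simpa using hss), card_singleton]
    rw [hgen, Finset.sum_insert (by simpa using hss), Finset.sum_singleton,
      cardF_s1 ha hb hab hss, cardF_s2 ha hb hab hss]
    obtain ⟨q, rfl⟩ : ∃ q, p = q + 5 := ⟨p - 5, by omega⟩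
    have e1 : q + 5 - 2 - 2 = q + 1 := by omega
    have e2 : q + 5 - 5 = q := by omega
    have e3 : q + 5 - 3 = q + 2 := by omega
    have e4 : q + 5 - 4 = q + 1 := by omega
    rw [e1, e2, e3, e4]
    ring

lemma card_goodC (hp5 : 5 ≤ p) :
    Nat.card {q : (ZMod p × ZMod p) × (ZMod p × ZMod p) // goodC q} =
      ((p - 1) * (p - 2)) * ((p - 3) * (p - 4)) := by
  classical
  rw [nat_card_prod_subtype]
  have hfib : ∀ ab : ZMod p × ZMod p,
      Nat.card {cd : ZMod p × ZMod p // goodC (ab, cd)} =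
      if (ab.1 ≠ 0 ∧ ab.2 ≠ 0 ∧ ab.2 - ab.1 ≠ 0) then (p - 3) * (p - 4) else 0 := by
    rintro ⟨a, b⟩
    by_cases h : a ≠ 0 ∧ b ≠ 0 ∧ b - a ≠ 0
    · rw [if_pos h, card_goodCD hp5 h.1 h.2.1 h.2.2]
    · rw [if_neg h]
      apply nat_card_subtype_eq_zero
      intro cd hcd
      exact h ⟨hcd.2.2.2.2.1, hcd.2.1, hcd.2.2.2.2.2.2.2.1⟩
  rw [Finset.sum_congr rfl (fun ab _ => hfib ab), Finset.sum_ite, Finset.sum_const,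
    Finset.sum_const_zero, add_zero, smul_eq_mul]
  congr 1
  -- count pairs (a,b) with a ≠ 0, b ≠ 0, b - a ≠ 0
  rw [← nat_card_subtype_filter, nat_card_prod_subtype]
  have hfib2 : ∀ a : ZMod p,
      Nat.card {b : ZMod p // a ≠ 0 ∧ b ≠ 0 ∧ b - a ≠ 0} =
      if a ≠ 0 then p - 2 else 0 := by
    intro a
    by_cases h : a ≠ 0
    · rw [if_pos h, nat_card_subtype_filter]
      have : (univ.filter fun b : ZMod p => a ≠ 0 ∧ b ≠ 0 ∧ b - a ≠ 0) =
          univ \ ({0, a} : Finset (ZMod p)) := by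
        ext b
        simp only [mem_filter, mem_univ, true_and, mem_sdiff, mem_insert, mem_singleton]
        constructor
        · intro hh
          push_neg
          exact ⟨hh.2.1, fun h0 => hh.2.2 (by rw [h0]; ring)⟩
        · intro hh
          push_neg at hh
          exact ⟨h, hh.1, fun h0 => hh.2 (by linear_combination h0)⟩
      rw [this, Finset.card_sdiff_of_subset (Finset.subset_univ _), Finset.card_univ, ZMod.card,
        card_insert_of_notMem (by simpa using (Ne.symm h)), card_singleton]
    · rw [if_neg h]
      exact nat_card_subtype_eq_zero fun b hb => h hb.1
  rw [Finset.sum_congr rfl (fun a _ => hfib2 a), Finset.sum_ite, Finset.sum_const,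
    Finset.sum_const_zero, add_zero, smul_eq_mul]
  have hcard1 : (univ.filter fun a : ZMod p => a ≠ 0).card = p - 1 := by
    rw [Finset.filter_ne', Finset.card_erase_of_mem (mem_univ _), Finset.card_univ, ZMod.card]
  rw [hcard1]

end Sums

lemma det2_eq_zero_iff {x : ZMod p × ZMod p} (hx : x ≠ 0) (y : ZMod p × ZMod p) :
    det2 x y = 0 ↔ ∃ μ : ZMod p, (μ * x.1, μ * x.2) = y := by
  constructor
  · intro hD
    simp only [det2] at hD
    rcases Decidable.em (x.1 = 0) with h1 | h1
    · have h2 : x.2 ≠ 0 := fun h2 => hx (Prod.ext h1 h2)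
      refine ⟨y.2 / x.2, Prod.ext ?_ ?_⟩
      · show y.2 / x.2 * x.1 = y.1
        have hy1 : x.2 * y.1 = 0 := by linear_combination y.2 * h1 - hD
        rcases mul_eq_zero.1 hy1 with h | h
        · exact absurd h h2
        · rw [h1, h]; ring
      · show y.2 / x.2 * x.2 = y.2
        field_simp
    · refine ⟨y.1 / x.1, Prod.ext ?_ ?_⟩
      · show y.1 / x.1 * x.1 = y.1
        field_simp
      · show y.1 / x.1 * x.2 = y.2
        field_simp
        linear_combination -hD
  · rintro ⟨μ, rfl⟩
    simp only [det2]
    ring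

lemma card_not_line {x : ZMod p × ZMod p} (hx : x ≠ 0) :
    Nat.card {y : ZMod p × ZMod p // det2 x y ≠ 0} = p * p - p := by
  classical
  rw [nat_card_subtype_filter]
  have hinj : Function.Injective (fun μ : ZMod p => (μ * x.1, μ * x.2)) := by
    intro μ ν h
    have h1 : μ * x.1 = ν * x.1 := congrArg Prod.fst h
    have h2 : μ * x.2 = ν * x.2 := congrArg Prod.snd h
    by_contra hne
    apply hx
    have e1 : (μ - ν) * x.1 = 0 := by linear_combination h1
    have e2 : (μ - ν) * x.2 = 0 := by linear_combination h2
    have hμν : μ - ν ≠ 0 := sub_ne_zero.2 hne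
    refine Prod.ext ?_ ?_
    · rcases mul_eq_zero.1 e1 with h' | h'
      · exact absurd h' hμν
      · exact h'
    · rcases mul_eq_zero.1 e2 with h' | h'
      · exact absurd h' hμν
      · exact h'
  have hfil : (univ.filter fun y => det2 x y ≠ 0) =
      univ \ (univ.image fun μ : ZMod p => (μ * x.1, μ * x.2)) := by
    ext y
    simp only [mem_filter, mem_univ, true_and, mem_sdiff, mem_image]
    rw [ne_eq, det2_eq_zero_iff hx y]
  rw [hfil, Finset.card_sdiff_of_subset (Finset.subset_univ _), Finset.card_univ, Fintype.card_prod,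
    ZMod.card, Finset.card_image_of_injective _ hinj, Finset.card_univ, ZMod.card]

lemma card_bases :
    (univ.filter fun t : (ZMod p × ZMod p) × (ZMod p × ZMod p) => det2 t.1 t.2 ≠ 0).card =
      (p * p - 1) * (p * p - p) := by
  classical
  rw [← nat_card_subtype_filter, nat_card_prod_subtype]
  have hfib : ∀ x : ZMod p × ZMod p,
      Nat.card {y : ZMod p × ZMod p // det2 x y ≠ 0} = if x ≠ 0 then p * p - p else 0 := by
    intro x
    by_cases h : x ≠ 0
    · rw [if_pos h, card_not_line h]
    · rw [if_neg h]
      push_neg at h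
      subst h
      exact nat_card_subtype_eq_zero fun y hy => hy (by simp [det2])
  rw [Finset.sum_congr rfl (fun x _ => hfib x), Finset.sum_ite, Finset.sum_const,
    Finset.sum_const_zero, add_zero, smul_eq_mul]
  congr 1
  rw [Finset.filter_ne', Finset.card_erase_of_mem (mem_univ _), Finset.card_univ,
    Fintype.card_prod, ZMod.card]


lemma card_good (hp5 : 5 ≤ p) :
    Nat.card {q : ((ZMod p × ZMod p) × (ZMod p × ZMod p)) ×
        ((ZMod p × ZMod p) × (ZMod p × ZMod p)) // good q} =
      ((p * p - 1) * (p * p - p)) * (((p - 1) * (p - 2)) * ((p - 3) * (p - 4))) := by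
  classical
  rw [nat_card_prod_subtype]
  have hfib : ∀ t₁ : (ZMod p × ZMod p) × (ZMod p × ZMod p),
      Nat.card {t₂ : (ZMod p × ZMod p) × (ZMod p × ZMod p) // good (t₁, t₂)} =
      if det2 t₁.1 t₁.2 ≠ 0 then ((p - 1) * (p - 2)) * ((p - 3) * (p - 4)) else 0 := by
    rintro ⟨x₁, y₁⟩
    by_cases hD : det2 x₁ y₁ ≠ 0
    · rw [if_pos hD, ← card_goodC hp5]
      exact Nat.card_congr (Equiv.subtypeEquiv
        (Equiv.prodCongr (psi x₁ y₁ hD) (psi x₁ y₁ hD))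
        (fun q => (good_psi_iff x₁ y₁ hD q).symm)).symm
    · rw [if_neg hD]
      exact nat_card_subtype_eq_zero fun t₂ ht => hD ht.1
  rw [Finset.sum_congr rfl (fun t₁ _ => hfib t₁), Finset.sum_ite, Finset.sum_const,
    Finset.sum_const_zero, add_zero, smul_eq_mul, card_bases]

end CountingAux

section Statements

theorem statement0 (p : ℕ) (hp : p.Prime) (hp5 : 5 ≤ p) :
    Nat.card (beauvilleStructures (Multiplicative (ZMod p × ZMod p))) =
      (p + 1) * p * (p - 1) ^ 3 * (p - 2) * (p - 3) * (p - 4) := by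
  haveI : Fact p.Prime := ⟨hp⟩
  rw [beauville_eq_image, Nat.card_image_of_injective FF_injective]
  have hcoe : Nat.card {q | good (p := p) q} = Nat.card {q // good (p := p) q} := rfl
  rw [hcoe, card_good hp5]
  have h1 : 1 ≤ p * p := Nat.one_le_iff_ne_zero.2 (by positivity)
  have h2 : p ≤ p * p := Nat.le_mul_of_pos_left p (by omega)
  zify [h1, h2, (by omega : 1 ≤ p), (by omega : 2 ≤ p), (by omega : 3 ≤ p), (by omega : 4 ≤ p)]
  ring

end Statements

end Beauville
end

section
/- Let p be an odd prime and let G = M(p,e,i) with generators a, b. Then the center of G is Z(G) = ⟨a^{p^{e−i}}, b^{p^{e−i}}⟩. -/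
open Subgroup Equiv
open scoped commutatorElement

namespace Beauville

variable {G : Type*} [Group G]

section StatementTwoAux

open Finset

lemma binom_key' {p : ℕ} (hp : p.Prime) (hp3 : 3 ≤ p) {m : ℕ} (hm : 1 ≤ m) (c : ℤ) :
    ∃ d : ℤ, (1 + (p:ℤ)^m * c)^p = 1 + (p:ℤ)^(m+1) * c + (p:ℤ)^(m+2) * d := by
  have h1 : (1 + (p:ℤ)^m * c)^p
      = ∑ k ∈ range (p+1), ((p:ℤ)^m * c)^k * 1^(p-k) * (p.choose k) := by
    rw [add_comm]; exact add_pow _ _ p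
  rw [Finset.range_eq_Ico, Finset.sum_eq_sum_Ico_succ_bot (by omega),
      Finset.sum_eq_sum_Ico_succ_bot (by omega)] at h1
  have hdvd : (p:ℤ)^(m+2) ∣ ∑ k ∈ Ico 2 (p+1), ((p:ℤ)^m * c)^k * 1^(p-k) * (p.choose k) := by
    refine Finset.dvd_sum ?_
    intro k hk
    simp only [Finset.mem_Ico] at hk
    obtain ⟨hk2, hkp⟩ := hk
    rcases eq_or_lt_of_le (Nat.lt_succ_iff.mp hkp) with hkp' | hkp'
    · have hle : m + 2 ≤ m * k := by nlinarith
      have : (p:ℤ)^(m+2) ∣ ((p:ℤ)^m * c)^k := by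
        rw [mul_pow, ← pow_mul]
        exact dvd_mul_of_dvd_left (pow_dvd_pow _ hle) _
      exact (this.mul_right _).mul_right _
    · have hchoose : (p:ℤ) ∣ (p.choose k : ℤ) :=
        Int.natCast_dvd_natCast.2 (hp.dvd_choose_self (by omega) hkp')
      have h2 : (p:ℤ)^(m+1) ∣ ((p:ℤ)^m * c)^k := by
        rw [mul_pow, ← pow_mul]
        exact dvd_mul_of_dvd_left (pow_dvd_pow _ (by nlinarith)) _
      have := mul_dvd_mul ((h2.mul_right ((1:ℤ)^(p-k)))) hchoose
      rwa [← pow_succ] at this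
  obtain ⟨d, hd⟩ := hdvd
  refine ⟨d, ?_⟩
  rw [h1, hd]
  norm_num
  ring

lemma one_sub_pow' (p i : ℕ) (hp : p.Prime) (hp3 : 3 ≤ p) (hi : 1 ≤ i) :
    ∀ k : ℕ, ∃ c d : ℤ, (1 - (p:ℤ)^i)^(p^k) = 1 + (p:ℤ)^(i+k) * c ∧ c = -1 + p * d := by
  intro k
  induction k with
  | zero => exact ⟨-1, 0, by ring, by ring⟩
  | succ k ih =>
    obtain ⟨c, d, hc, hcd⟩ := ih
    obtain ⟨d', hd'⟩ := binom_key' hp hp3 (m := i + k) (by omega) c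
    refine ⟨c + p * d', d + d', ?_, by rw [hcd]; ring⟩
    have hps : (1 - (p:ℤ)^i)^(p^(k+1)) = ((1 - (p:ℤ)^i)^(p^k))^p := by
      rw [← pow_mul, pow_succ]
    rw [hps, hc, hd', show i + (k+1) = (i+k)+1 by omega]
    ring

lemma order_u' (p e i : ℕ) (hp : p.Prime) (hp3 : 3 ≤ p) (h1 : 1 ≤ i) (hie : i < e) :
    ∃ u : (ZMod (p^e))ˣ, (u : ZMod (p^e)) = 1 - (p : ZMod (p^e))^i ∧ orderOf u = p^(e-i) := by
  have hp0 : (p:ℤ) ≠ 0 := by exact_mod_cast hp.pos.ne'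
  obtain ⟨c₁, d₁, hc₁, _⟩ := one_sub_pow' p i hp hp3 h1 (e-i)
  obtain ⟨c₂, d₂, hc₂, hcd₂⟩ := one_sub_pow' p i hp hp3 h1 (e-i-1)
  rw [show i + (e-i) = e by omega] at hc₁
  rw [show i + (e-i-1) = e-1 by omega] at hc₂
  have hcast : ((p:ZMod (p^e)))^e = 0 := by
    have h := ZMod.natCast_self (p^e)
    push_cast at h
    exact h
  have hr1 : ((1 : ZMod (p^e)) - (p:ZMod (p^e))^i)^(p^(e-i)) = 1 := by
    have h := congrArg (fun z : ℤ => (z : ZMod (p^e))) hc₁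
    push_cast at h
    rwa [hcast, zero_mul, add_zero] at h
  have hu : IsUnit ((1 : ZMod (p^e)) - (p:ZMod (p^e))^i) :=
    IsUnit.of_pow_eq_one hr1 (pow_ne_zero _ hp.pos.ne')
  refine ⟨hu.unit, hu.unit_spec, ?_⟩
  have hupow : hu.unit ^ (p^(e-i)) = 1 := by
    apply Units.ext
    rw [Units.val_pow_eq_pow_val, hu.unit_spec, hr1, Units.val_one]
  have hune : hu.unit ^ (p^(e-i-1)) ≠ 1 := by
    intro h
    have h' : ((1 : ZMod (p^e)) - (p:ZMod (p^e))^i)^(p^(e-i-1)) = 1 := by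
      have := congrArg Units.val h
      rwa [Units.val_pow_eq_pow_val, hu.unit_spec, Units.val_one] at this
    have hcast2 := congrArg (fun z : ℤ => (z : ZMod (p^e))) hc₂
    push_cast at hcast2
    rw [h'] at hcast2
    have hz : ((p:ZMod (p^e)))^(e-1) * (c₂ : ZMod (p^e)) = 0 := (left_eq_add.1 hcast2)
    have hdvd : ((p^e : ℕ) : ℤ) ∣ (p:ℤ)^(e-1) * c₂ := by
      apply (ZMod.intCast_zmod_eq_zero_iff_dvd _ _).1
      push_cast
      exact hz
    rw [show ((p^e : ℕ) : ℤ) = (p:ℤ)^(e-1) * p by push_cast; rw [← pow_succ]; congr 1; omega]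
      at hdvd
    obtain ⟨k, hk⟩ := hdvd
    have hpc : c₂ = p * k := by
      have hne : ((p:ℤ)^(e-1)) ≠ 0 := pow_ne_zero _ hp0
      apply mul_left_cancel₀ hne
      rw [hk]; ring
    have hd1 : (p:ℤ) ∣ 1 := ⟨d₂ - k, by rw [hpc] at hcd₂; linarith⟩
    have := Int.le_of_dvd one_pos hd1
    have : (3:ℤ) ≤ p := by exact_mod_cast hp3
    omega
  have hord1 : orderOf hu.unit ∣ p^(e-i) := orderOf_dvd_of_pow_eq_one hupow
  obtain ⟨m, hm, hmeq⟩ := (Nat.dvd_prime_pow hp).1 hord1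
  rcases eq_or_lt_of_le hm with h | h
  · rw [hmeq, h]
  · exact absurd (orderOf_dvd_iff_pow_eq_one.1
      (hmeq ▸ pow_dvd_pow p (by omega : m ≤ e - i - 1))) hune

variable {G : Type*} [Group G]

lemma m_hba {p i : ℕ} {a b : G} (rel3 : a * b * a⁻¹ * b⁻¹ = a ^ p ^ i) :
    b * a * b⁻¹ = a ^ ((1:ℤ) - (p:ℤ)^i) := by
  rw [show (1:ℤ) - (p:ℤ)^i = -((p^i : ℕ) : ℤ) + 1 by push_cast; ring, zpow_add, zpow_one,
    zpow_neg, zpow_natCast, ← rel3]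
  group

lemma m_hba_pow {p i : ℕ} {a b : G} (rel3 : a * b * a⁻¹ * b⁻¹ = a ^ p ^ i) (n : ℤ) :
    b * a ^ n * b⁻¹ = a ^ (n * ((1:ℤ) - (p:ℤ)^i)) := by
  rw [← conj_zpow, m_hba rel3, ← zpow_mul, mul_comm]

lemma m_hbn {p i : ℕ} {a b : G} (rel3 : a * b * a⁻¹ * b⁻¹ = a ^ p ^ i) (n : ℕ) :
    b ^ n * a * (b ^ n)⁻¹ = a ^ (((1:ℤ) - (p:ℤ)^i) ^ n) := by
  induction n with
  | zero => simp
  | succ n ih =>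
    have : b ^ (n+1) * a * (b ^ (n+1))⁻¹ = b * (b ^ n * a * (b ^ n)⁻¹) * b⁻¹ := by group
    rw [this, ih, m_hba_pow rel3]
    congr 1
    rw [pow_succ]

lemma m_hbt {p e : ℕ} {b : G} (hq : p ^ e ≠ 0) (rel2 : b ^ p ^ e = 1) (t : ℤ) : ∃ n : ℕ, b ^ t = b ^ n := by
  refine ⟨(t % (p^e : ℕ)).toNat, ?_⟩
  have hq' : (0:ℤ) < ((p^e : ℕ) : ℤ) := by exact_mod_cast Nat.pos_of_ne_zero hq
  have hbz : b ^ ((p^e : ℕ) : ℤ) = 1 := by rw [zpow_natCast]; exact rel2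
  have hmod : t = ((p^e : ℕ) : ℤ) * (t / (p^e : ℕ)) + t % (p^e : ℕ) := (Int.mul_ediv_add_emod _ _).symm
  calc b ^ t = b ^ (((p^e : ℕ) : ℤ) * (t / (p^e : ℕ)) + t % (p^e : ℕ)) := by rw [← hmod]
    _ = (b ^ ((p^e : ℕ) : ℤ)) ^ (t / (p^e : ℕ)) * b ^ (t % (p^e : ℕ)) := by
        rw [← zpow_mul, ← zpow_add]
    _ = b ^ (t % (p^e : ℕ)) := by rw [hbz]; simp
    _ = b ^ ((t % (p^e : ℕ)).toNat : ℤ) := by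
        rw [Int.toNat_of_nonneg (Int.emod_nonneg _ (by omega))]
    _ = b ^ (t % (p^e : ℕ)).toNat := zpow_natCast _ _

lemma m_key_conj {p e i : ℕ} {a b : G} (hq : p ^ e ≠ 0) (rel2 : b ^ p ^ e = 1) (rel3 : a * b * a⁻¹ * b⁻¹ = a ^ p ^ i) (t : ℤ) :
    ∃ v : ℤ, ∀ s : ℤ, b ^ t * a ^ s * (b ^ t)⁻¹ = a ^ (v * s) := by
  obtain ⟨n, hn⟩ := m_hbt hq rel2 t
  refine ⟨((1:ℤ) - (p:ℤ)^i) ^ n, fun s => ?_⟩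
  rw [hn, ← conj_zpow, m_hbn rel3, ← zpow_mul]

def pα (q : ℕ) : Equiv.Perm (ZMod q × ZMod q) where
  toFun x := (x.1 + 1, x.2)
  invFun x := (x.1 - 1, x.2)
  left_inv x := by simp
  right_inv x := by simp

def pβ {q : ℕ} (u : (ZMod q)ˣ) : Equiv.Perm (ZMod q × ZMod q) where
  toFun x := (u • x.1, x.2 + 1)
  invFun x := (u⁻¹ • x.1, x.2 - 1)
  left_inv x := by simp
  right_inv x := by simp

variable {q : ℕ} (u : (ZMod q)ˣ)

@[simp] lemma pα_apply (x : ZMod q × ZMod q) : pα q x = (x.1 + 1, x.2) := rfl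
@[simp] lemma pα_inv_apply (x : ZMod q × ZMod q) : (pα q)⁻¹ x = (x.1 - 1, x.2) := rfl
@[simp] lemma pβ_apply (x : ZMod q × ZMod q) : pβ u x = (u • x.1, x.2 + 1) := rfl
@[simp] lemma pβ_inv_apply (x : ZMod q × ZMod q) : (pβ u)⁻¹ x = (u⁻¹ • x.1, x.2 - 1) := rfl

lemma pα_zpow (n : ℤ) : ∀ x : ZMod q × ZMod q,
    ((pα q) ^ n) x = (x.1 + (n : ZMod q), x.2) := by
  induction n using Int.induction_on with
  | zero => intro x; simp
  | succ n ih =>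
    intro x
    rw [zpow_add_one, Equiv.Perm.mul_apply, pα_apply, ih]
    simp only [Prod.mk.injEq]
    exact ⟨by push_cast; ring, trivial⟩
  | pred n ih =>
    intro x
    rw [zpow_sub_one, Equiv.Perm.mul_apply, pα_inv_apply, ih]
    simp only [Prod.mk.injEq]
    exact ⟨by push_cast; ring, trivial⟩

lemma pβ_zpow (n : ℤ) : ∀ x : ZMod q × ZMod q,
    ((pβ u) ^ n) x = ((u ^ n) • x.1, x.2 + (n : ZMod q)) := by
  induction n using Int.induction_on with
  | zero => intro x; simp
  | succ n ih =>
    intro x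
    rw [zpow_add_one, Equiv.Perm.mul_apply, pβ_apply, ih, smul_smul, ← zpow_add_one]
    simp only [Prod.mk.injEq]
    exact ⟨trivial, by push_cast; ring⟩
  | pred n ih =>
    intro x
    rw [zpow_sub_one, Equiv.Perm.mul_apply, pβ_inv_apply, ih, smul_smul, ← zpow_sub_one]
    simp only [Prod.mk.injEq]
    exact ⟨trivial, by push_cast; ring⟩

lemma m_rel (p e i : ℕ) (r : FreeGroup Bool) (hr : r ∈ MRels p e i) :
    PresentedGroup.mk (MRels p e i) r = 1 :=
  (QuotientGroup.eq_one_iff _).2 (Subgroup.subset_normalClosure hr)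

lemma m_rel1 (p e i : ℕ) : ma p e i ^ p ^ e = 1 := by
  have h := m_rel p e i (fA ^ p ^ e) (Set.mem_insert _ _)
  rw [map_pow] at h
  exact h

lemma m_rel2 (p e i : ℕ) : mb p e i ^ p ^ e = 1 := by
  have h := m_rel p e i (fB ^ p ^ e) (Set.mem_insert_of_mem _ (Set.mem_insert _ _))
  rw [map_pow] at h
  exact h

lemma m_rel3 (p e i : ℕ) :
    ma p e i * mb p e i * (ma p e i)⁻¹ * (mb p e i)⁻¹ = ma p e i ^ p ^ i := by
  have h := m_rel p e i (⁅fA, fB⁆ * (fA ^ p ^ i)⁻¹)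
    (Set.mem_insert_of_mem _ (Set.mem_insert_of_mem _ rfl))
  rw [map_mul, map_inv, map_pow, mul_inv_eq_one, commutatorElement_def, map_mul, map_mul,
    map_inv, map_inv] at h
  exact h

lemma m_normal_form (p e i : ℕ) (hq : p ^ e ≠ 0) (g : MGroup p e i) :
    ∃ s t : ℤ, g = ma p e i ^ s * mb p e i ^ t := by
  let S : Subgroup (MGroup p e i) :=
  { carrier := {g | ∃ s t : ℤ, g = ma p e i ^ s * mb p e i ^ t}
    one_mem' := ⟨0, 0, by simp⟩
    mul_mem' := by
      rintro x y ⟨s, t, rfl⟩ ⟨s', t', rfl⟩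
      obtain ⟨v, hv⟩ := m_key_conj hq (m_rel2 p e i) (m_rel3 p e i) t
      refine ⟨s + v * s', t + t', ?_⟩
      rw [zpow_add, zpow_add, ← hv s']
      group
    inv_mem' := by
      rintro x ⟨s, t, rfl⟩
      obtain ⟨v, hv⟩ := m_key_conj hq (m_rel2 p e i) (m_rel3 p e i) (-t)
      refine ⟨v * -s, -t, ?_⟩
      rw [← hv (-s)]
      group }
  have hS : S = ⊤ := by
    rw [eq_top_iff, ← PresentedGroup.closure_range_of (MRels p e i), Subgroup.closure_le]
    rintro - ⟨x, rfl⟩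
    cases x
    · exact ⟨0, 1, by simp [mb]⟩
    · exact ⟨1, 0, by simp [ma]⟩
  have : g ∈ S := by rw [hS]; trivial
  exact this

end StatementTwoAux

section Statements

set_option maxHeartbeats 1000000 in
theorem statement2 (p e i : ℕ) (hp : p.Prime) (hodd : Odd p) (h1 : 1 ≤ i) (h2 : i ≤ e - 1) :
    Subgroup.center (MGroup p e i) =
      Subgroup.closure {ma p e i ^ p ^ (e - i), mb p e i ^ p ^ (e - i)} := by
  classical
  have hp3 : 3 ≤ p := by
    obtain ⟨m, hm⟩ := hodd
    have := hp.two_le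
    omega
  have he : 2 ≤ e := by omega
  have hie : i < e := by omega
  have hq0 : p ^ e ≠ 0 := pow_ne_zero _ (by omega)
  obtain ⟨u, hu_coe, hu_ord⟩ := order_u' p e i hp hp3 h1 hie
  obtain ⟨c₁, d₁, hc₁, _⟩ := one_sub_pow' p i hp hp3 h1 (e-i)
  rw [show i + (e-i) = e by omega] at hc₁
  -- the permutation representation
  have hrels : ∀ r ∈ MRels p e i,
      FreeGroup.lift (fun x => bif x then pα (p^e) else pβ u) r = 1 := by
    intro r hr
    simp only [MRels, Set.mem_insert_iff, Set.mem_singleton_iff] at hr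
    have hliftA : FreeGroup.lift (fun x => bif x then pα (p^e) else pβ u) fA = pα (p^e) :=
      FreeGroup.lift_apply_of
    have hliftB : FreeGroup.lift (fun x => bif x then pα (p^e) else pβ u) fB = pβ u :=
      FreeGroup.lift_apply_of
    have hcast : (((p^e : ℕ) : ℤ) : ZMod (p^e)) = 0 := by
      rw [Int.cast_natCast, ZMod.natCast_self]
    have hu1 : u ^ (p ^ e) = 1 :=
      orderOf_dvd_iff_pow_eq_one.1 (hu_ord ▸ pow_dvd_pow p (by omega : e - i ≤ e))
    rcases hr with rfl | rfl | rfl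
    · rw [map_pow, hliftA]
      apply Equiv.ext
      intro x
      rw [← zpow_natCast, pα_zpow, hcast, add_zero, Equiv.Perm.one_apply]
    · rw [map_pow, hliftB]
      apply Equiv.ext
      intro x
      rw [← zpow_natCast, pβ_zpow, hcast, add_zero, zpow_natCast, hu1, one_smul,
        Equiv.Perm.one_apply]
    · rw [commutatorElement_def, map_mul, map_mul, map_mul, map_mul, map_inv, map_inv,
        map_inv, map_pow, hliftA, hliftB, mul_inv_eq_one]
      apply Equiv.ext
      intro x
      rw [← zpow_natCast, pα_zpow]
      simp only [Equiv.Perm.mul_apply, pα_apply, pβ_apply, pα_inv_apply, pβ_inv_apply]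
      simp only [smul_sub, smul_inv_smul]
      simp only [Units.smul_def, hu_coe, smul_eq_mul, mul_one, Prod.mk.injEq]
      refine ⟨?_, ?_⟩
      · push_cast
        ring
      · ring
  set f := PresentedGroup.toGroup hrels with hf_def
  have hfa : f (ma p e i) = pα (p^e) := PresentedGroup.toGroup.of hrels
  have hfb : f (mb p e i) = pβ u := PresentedGroup.toGroup.of hrels
  apply le_antisymm
  · -- center ≤ closure
    intro g hg
    obtain ⟨s, t, rfl⟩ := m_normal_form p e i hq0 g
    have hcen := Subgroup.mem_center_iff.1 hg
    have hcomma : pα (p^e) * ((pα (p^e))^s * (pβ u)^t)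
        = ((pα (p^e))^s * (pβ u)^t) * pα (p^e) := by
      have h := congrArg f (hcen (ma p e i))
      simp only [map_mul, map_zpow, hfa, hfb] at h
      exact h
    have hcommb : pβ u * ((pα (p^e))^s * (pβ u)^t)
        = ((pα (p^e))^s * (pβ u)^t) * pβ u := by
      have h := congrArg f (hcen (mb p e i))
      simp only [map_mul, map_zpow, hfa, hfb] at h
      exact h
    have hFval : ∀ x : ZMod (p^e) × ZMod (p^e),
        ((pα (p^e))^s * (pβ u)^t) x = ((u^t) • x.1 + (s : ZMod (p^e)), x.2 + (t : ZMod (p^e))) := by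
      intro x
      rw [Equiv.Perm.mul_apply, pβ_zpow, pα_zpow]
    -- evaluate the a-commutation at (0,0)
    have h₁ := congrArg (fun σ : Equiv.Perm (ZMod (p^e) × ZMod (p^e)) => σ (0, 0)) hcomma
    simp only [Equiv.Perm.mul_apply, hFval, pα_apply, smul_zero, zero_add, add_zero,
      Prod.mk.injEq] at h₁
    have h₂ := congrArg (fun σ : Equiv.Perm (ZMod (p^e) × ZMod (p^e)) => σ (0, 0)) hcommb
    simp only [Equiv.Perm.mul_apply, hFval, pβ_apply, smul_zero, zero_add, add_zero,
      Prod.mk.injEq] at h₂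
    have hts : (u ^ t : (ZMod (p^e))ˣ) = 1 := by
      apply Units.ext
      have h1' := h₁.1
      rw [Units.smul_def, smul_eq_mul, mul_one] at h1'
      have hv : ((u^t : (ZMod (p^e))ˣ) : ZMod (p^e)) = 1 := by linear_combination -h1'
      simpa using hv
    have hdt : ((p^(e-i) : ℕ) : ℤ) ∣ t := by
      have hh := (orderOf_dvd_iff_zpow_eq_one).2 hts
      rwa [hu_ord] at hh
    have hps : (p : ZMod (p^e))^i * ((s:ℤ) : ZMod (p^e)) = 0 := by
      have h2' := h₂.1
      rw [Units.smul_def, smul_eq_mul, hu_coe] at h2'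
      linear_combination -h2'
    have hdvd2 : ((p^e : ℕ) : ℤ) ∣ (p:ℤ)^i * s := by
      apply (ZMod.intCast_zmod_eq_zero_iff_dvd _ _).1
      push_cast
      exact hps
    have hs : (p:ℤ)^(e-i) ∣ s := by
      obtain ⟨k, hk⟩ := hdvd2
      refine ⟨k, ?_⟩
      have hne : ((p:ℤ)^i) ≠ 0 := pow_ne_zero _ (by exact_mod_cast hp.pos.ne')
      apply mul_left_cancel₀ hne
      rw [hk]
      push_cast
      rw [show (p:ℤ)^e = (p:ℤ)^i * (p:ℤ)^(e-i) by rw [← pow_add]; congr 1; omega]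
      ring
    obtain ⟨s₀, hs₀⟩ := hs
    obtain ⟨t₀, ht₀⟩ := hdt
    have hmem1 : ma p e i ^ s ∈
        Subgroup.closure {ma p e i ^ p ^ (e-i), mb p e i ^ p ^ (e-i)} := by
      rw [hs₀, show ((p:ℤ)^(e-i)) = ((p^(e-i) : ℕ) : ℤ) by push_cast; ring, zpow_mul,
        zpow_natCast]
      exact Subgroup.zpow_mem _ (Subgroup.subset_closure (Set.mem_insert _ _)) s₀
    have hmem2 : mb p e i ^ t ∈
        Subgroup.closure {ma p e i ^ p ^ (e-i), mb p e i ^ p ^ (e-i)} := by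
      rw [ht₀, zpow_mul, zpow_natCast]
      refine Subgroup.zpow_mem _ (Subgroup.subset_closure ?_) t₀
      exact Set.mem_insert_of_mem _ (Set.mem_singleton _)
    exact Subgroup.mul_mem _ hmem1 hmem2
    
  · -- closure ≤ center
    rw [Subgroup.closure_le]
    intro x hx
    have hcab : Commute (ma p e i ^ p ^ (e-i)) (mb p e i) := by
      have h := m_hba_pow (m_rel3 p e i) ((p^(e-i) : ℕ) : ℤ)
      rw [show ((p^(e-i):ℕ) : ℤ) * (1 - (p:ℤ)^i) = ((p^(e-i):ℕ):ℤ) - ((p^e :ℕ):ℤ) by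
          push_cast
          rw [show (p:ℤ)^e = (p:ℤ)^(e-i) * (p:ℤ)^i by rw [← pow_add]; congr 1; omega]
          ring,
        zpow_sub, zpow_natCast, zpow_natCast, m_rel1 p e i, inv_one, mul_one] at h
      have h2 : mb p e i * ma p e i ^ p ^ (e-i) = ma p e i ^ p ^ (e-i) * mb p e i := by
        conv_rhs => rw [← h]
        group
      exact h2.symm
    have hcba : Commute (mb p e i ^ p ^ (e-i)) (ma p e i) := by
      have h := m_hbn (m_rel3 p e i) (p^(e-i))
      rw [hc₁, zpow_add, zpow_one,
        show ((p:ℤ)^e * c₁ : ℤ) = ((p^e :ℕ):ℤ) * c₁ by push_cast; ring,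
        zpow_mul, zpow_natCast, m_rel1 p e i, one_zpow, mul_one] at h
      have h2 : mb p e i ^ p ^ (e-i) * ma p e i
          = ma p e i * mb p e i ^ p ^ (e-i) := by
        conv_rhs => rw [← h]
        group
      exact h2
    rcases hx with rfl | hx
    · rw [SetLike.mem_coe, Subgroup.mem_center_iff]
      intro g
      obtain ⟨s, t, rfl⟩ := m_normal_form p e i hq0 g
      have hc : Commute (ma p e i ^ p ^ (e-i)) (ma p e i ^ s * mb p e i ^ t) :=
        (((Commute.refl (ma p e i)).pow_left _).zpow_right s).mul_right (hcab.zpow_right t)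
      exact hc.eq.symm
    · rw [Set.mem_singleton_iff] at hx
      subst hx
      rw [SetLike.mem_coe, Subgroup.mem_center_iff]
      intro g
      obtain ⟨s, t, rfl⟩ := m_normal_form p e i hq0 g
      have hc : Commute (mb p e i ^ p ^ (e-i)) (ma p e i ^ s * mb p e i ^ t) :=
        (hcba.zpow_right s).mul_right (((Commute.refl (mb p e i)).pow_left _).zpow_right t)
      exact hc.eq.symm

end Statements

end Beauville
end

section
/- Let p be an odd prime and let G = M(p,e,i) with generators a, b. A map θ defined on the generators extends to an inner automorphism of G if and only if θ(a) = a^{1+μ p^i} and θ(b) = b·a^{η p^i} for some 1 ≤ μ, η ≤ p^{e−i}. -/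
open Subgroup Equiv

namespace Beauville

variable {G : Type*} [Group G]

-- ===== auxiliary development for statement4 =====
section Stmt4Aux

open Finset

lemma dvd_sum_range_id (p : ℕ) (hodd : Odd p) : p ∣ ∑ j ∈ range p, j := by
  have h2 : (∑ j ∈ range p, j) * 2 = p * (p - 1) := Finset.sum_range_id_mul_two p
  have hd : p ∣ (∑ j ∈ range p, j) * 2 := h2 ▸ Dvd.intro _ rfl
  have hcop : Nat.Coprime p 2 :=
    ((Nat.prime_two.coprime_iff_not_dvd).mpr (Nat.two_dvd_ne_zero.mpr (Nat.odd_iff.mp hodd))).symm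
  exact hcop.dvd_of_dvd_mul_right hd

lemma dvd_pow_sub_one {d x : ℤ} (hx : d ∣ x - 1) (l : ℕ) : d ∣ x ^ l - 1 :=
  dvd_trans hx ⟨∑ k ∈ range l, x^k, by rw [← geom_sum_mul]; ring⟩

lemma I1 (p : ℕ) (hodd : Odd p) (x : ℤ) (hx : (p:ℤ) ∣ x - 1) :
    ∃ z : ℤ, (∑ j ∈ Finset.range p, x^j) = p + p^2 * z := by
  set T : ℤ := ∑ j ∈ range p, ∑ l ∈ range j, x^l with hT
  have key : (∑ j ∈ Finset.range p, x^j) - p = T * (x - 1) := by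
    calc (∑ j ∈ Finset.range p, x^j) - p = ∑ j ∈ range p, (x^j - 1) := by
          rw [Finset.sum_sub_distrib]; simp
      _ = ∑ j ∈ range p, (∑ l ∈ range j, x^l) * (x - 1) := by
          exact Finset.sum_congr rfl fun j _ => (geom_sum_mul x j).symm
      _ = T * (x - 1) := by rw [hT, Finset.sum_mul]
  have hpT : (p:ℤ) ∣ T - ∑ j ∈ range p, (j:ℤ) := by
    rw [hT, ← Finset.sum_sub_distrib]
    apply Finset.dvd_sum
    intro j _
    have h1 : (∑ l ∈ range j, x^l) - (j:ℤ) = ∑ l ∈ range j, (x^l - 1) := by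
      rw [Finset.sum_sub_distrib]; simp
    rw [h1]
    exact Finset.dvd_sum fun l _ => dvd_pow_sub_one hx l
  have hsum : (p:ℤ) ∣ ∑ j ∈ range p, (j:ℤ) := by
    have h := dvd_sum_range_id p hodd
    have h2 : (p:ℤ) ∣ ((∑ j ∈ range p, j : ℕ) : ℤ) := Int.natCast_dvd_natCast.2 h
    simpa using h2
  have hTdvd : (p:ℤ) ∣ T := by
    have := dvd_add hpT hsum
    simpa using this
  obtain ⟨T', hT'⟩ := hTdvd
  obtain ⟨w, hw⟩ := hx
  refine ⟨T' * w, ?_⟩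
  have h3 : (∑ j ∈ Finset.range p, x^j) = p + (p * T') * (x - 1) := by
    rw [← hT']; linarith [key]
  rw [h3, hw]; ring

lemma I2 (p : ℕ) (hodd : Odd p) (k : ℕ) (hk : 1 ≤ k) (w : ℤ) :
    ∃ z : ℤ, (1 + (p:ℤ)^k * w)^p = 1 + (p:ℤ)^(k+1) * w + (p:ℤ)^(k+2) * z := by
  set x : ℤ := 1 + (p:ℤ)^k * w with hx
  have hdvd : (p:ℤ) ∣ x - 1 := by
    rw [hx]
    have : (p:ℤ) ∣ (p:ℤ)^k := dvd_pow_self _ (by omega)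
    exact dvd_trans this ⟨w, by ring⟩
  obtain ⟨z₀, hz₀⟩ := I1 p hodd x hdvd
  refine ⟨z₀ * w, ?_⟩
  have hgeom : (∑ j ∈ range p, x^j) * (x - 1) = x ^ p - 1 := geom_sum_mul x p
  have hx1 : x - 1 = (p:ℤ)^k * w := by rw [hx]; ring
  have : x ^ p - 1 = ((p:ℤ) + (p:ℤ)^2 * z₀) * ((p:ℤ)^k * w) := by
    rw [← hgeom, hz₀, hx1]
  have h2 : x ^ p = 1 + ((p:ℤ) + (p:ℤ)^2 * z₀) * ((p:ℤ)^k * w) := by linarith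
  rw [h2]; ring

lemma I3 (p : ℕ) (hodd : Odd p) (i : ℕ) (hi : 1 ≤ i) (m : ℕ) :
    ∃ w : ℤ, (1 - (p:ℤ)^i)^(p^m) = 1 + (p:ℤ)^(i+m) * w ∧ (p:ℤ) ∣ w + 1 := by
  induction m with
  | zero => exact ⟨-1, by ring_nf, by simp⟩
  | succ m ih =>
    obtain ⟨w, hw, hdvd⟩ := ih
    obtain ⟨z, hz⟩ := I2 p hodd (i+m) (by omega) w
    refine ⟨w + p * z, ?_, ?_⟩
    · rw [pow_succ, pow_mul, hw, hz]; ring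
    · obtain ⟨c, hc⟩ := hdvd
      exact ⟨c + z, by rw [mul_add, ← hc]; ring⟩


variable {p i N : ℕ}

lemma Zzero (hp : p.Prime) {k : ℕ} (hk : i + N ≤ k) : ((p : ZMod (p^(i+N))))^k = 0 := by
  rw [← Nat.cast_pow, ZMod.natCast_eq_zero_iff]
  exact pow_dvd_pow p hk

lemma Zunit (hp : p.Prime) (hi : 1 ≤ i) :
    IsUnit (1 - (p : ZMod (p^(i+N)))^i) := by
  set t : ZMod (p^(i+N)) := (p : ZMod (p^(i+N)))^i with ht
  have htop : t^(i+N) = 0 := by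
    rw [ht, ← pow_mul]
    exact Zzero hp (Nat.le_mul_of_pos_left _ (by omega))
  refine IsUnit.of_mul_eq_one (∑ j ∈ Finset.range (i+N), t^j) ?_
  have h2 : (∑ j ∈ Finset.range (i+N), t^j) * (t - 1) = -1 := by
    rw [geom_sum_mul t (i+N), htop]; ring
  linear_combination -h2

lemma Zord1 (hp : p.Prime) (hodd : Odd p) (hi : 1 ≤ i) :
    (1 - (p : ZMod (p^(i+N)))^i)^(p^N) = 1 := by
  obtain ⟨w, hw, -⟩ := I3 p hodd i hi N
  have := congrArg (Int.cast : ℤ → ZMod (p^(i+N))) hw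
  push_cast at this
  rw [this, Zzero hp le_rfl]
  ring

lemma Zord2 (hp : p.Prime) (hodd : Odd p) (hi : 1 ≤ i) (hN : 1 ≤ N) :
    (1 - (p : ZMod (p^(i+N)))^i)^(p^(N-1)) ≠ 1 := by
  obtain ⟨w, hw, hdvd⟩ := I3 p hodd i hi (N-1)
  intro hcon
  have hcast := congrArg (Int.cast : ℤ → ZMod (p^(i+N))) hw
  push_cast at hcast
  rw [hcon] at hcast
  have h0' : ((p:ZMod (p^(i+N))))^(i+(N-1)) * (w : ZMod (p^(i+N))) = 0 := by
    linear_combination -hcast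
  have h0 : ((  (p:ℤ)^(i+(N-1)) * w : ℤ) : ZMod (p^(i+N))) = 0 := by
    push_cast; exact h0'
  rw [ZMod.intCast_zmod_eq_zero_iff_dvd] at h0
  have hkey : ((p:ℤ)^(i+N)) ∣ (p:ℤ)^(i+(N-1)) * w := by exact_mod_cast h0
  have hiN : i + N = (i + (N-1)) + 1 := by omega
  rw [hiN, pow_succ] at hkey
  have hpw : (p:ℤ) ∣ w := by
    have hne : ((p:ℤ)^(i+(N-1))) ≠ 0 := pow_ne_zero _ (by exact_mod_cast hp.ne_zero)
    exact (mul_dvd_mul_iff_left hne).mp hkey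
  obtain ⟨c, hc⟩ := hpw
  obtain ⟨d, hd⟩ := hdvd
  have : (p:ℤ) ∣ 1 := ⟨d - c, by rw [mul_sub, ← hd, ← hc]; ring⟩
  have := Int.le_of_dvd one_pos this
  have := hp.two_le
  omega


open Finset


lemma mul_pow_mod (hp : p.Prime) (m : ℕ) :
    ((m : ZMod (p^(i+N))) * (p : ZMod (p^(i+N)))^i) =
      ((m % p^N : ℕ) : ZMod (p^(i+N))) * (p : ZMod (p^(i+N)))^i := by
  have hdecomp : m * p^i = p^(i+N) * (m / p^N) + (m % p^N) * p^i := by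
    conv_lhs => rw [← Nat.div_add_mod m (p^N)]
    ring
  have := congrArg (fun k : ℕ => (k : ZMod (p^(i+N)))) hdecomp
  push_cast at this
  rw [this, Zzero hp le_rfl]
  ring

lemma key_mul (hp : p.Prime) (x : ZMod (p^(i+N))) :
    ∃ k : ℕ, k < p^N ∧ (p : ZMod (p^(i+N)))^i * x = (k : ZMod (p^(i+N))) * (p : ZMod (p^(i+N)))^i := by
  haveI : NeZero (p^(i+N)) := ⟨pow_ne_zero _ hp.pos.ne'⟩
  refine ⟨x.val % p^N, Nat.mod_lt _ (pow_pos hp.pos _), ?_⟩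
  have hx : ((x.val : ℕ) : ZMod (p^(i+N))) = x := ZMod.natCast_zmod_val x
  have h := mul_pow_mod (i := i) (N := N) hp x.val
  rw [hx] at h
  rw [mul_comm]
  exact h


lemma key_pow (hp : p.Prime) (s : ℕ) :
    ∃ k : ℕ, k < p^N ∧ (1 - (p : ZMod (p^(i+N)))^i)^s =
      1 + (k : ZMod (p^(i+N))) * (p : ZMod (p^(i+N)))^i := by
  have hdvd : ((p:ℤ)^i) ∣ (1 - (p:ℤ)^i) - 1 := ⟨-1, by ring⟩
  obtain ⟨K, hK⟩ := dvd_pow_sub_one hdvd s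
  obtain ⟨k, hk, hk2⟩ := key_mul hp ((K : ℤ) : ZMod (p^(i+N)))
  refine ⟨k, hk, ?_⟩
  have hcast := congrArg (Int.cast : ℤ → ZMod (p^(i+N))) hK
  push_cast at hcast
  calc (1 - (p : ZMod (p^(i+N)))^i)^s
      = 1 + (p : ZMod (p^(i+N)))^i * ((K : ℤ) : ZMod (p^(i+N))) := by
        linear_combination hcast
    _ = 1 + (k : ZMod (p^(i+N))) * (p : ZMod (p^(i+N)))^i := by rw [hk2]

lemma ZA1 (hp : p.Prime) (s : ℕ) :
    ∃ μ : ℕ, 1 ≤ μ ∧ μ ≤ p^N ∧ (1 - (p : ZMod (p^(i+N)))^i)^s =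
      1 + (μ : ZMod (p^(i+N))) * (p : ZMod (p^(i+N)))^i := by
  obtain ⟨k, hk, hk2⟩ := key_pow hp s
  rcases Nat.eq_zero_or_pos k with rfl | hpos
  · refine ⟨p^N, Nat.one_le_iff_ne_zero.mpr (pow_ne_zero _ hp.pos.ne'), le_rfl, ?_⟩
    rw [hk2]
    have h0 : ((p^N : ℕ) : ZMod (p^(i+N))) * (p : ZMod (p^(i+N)))^i = 0 := by
      have := mul_pow_mod (i := i) (N := N) hp (p^N)
      simpa using this
    push_cast at h0 ⊢
    rw [h0]
    simp
  · exact ⟨k, hpos, hk.le, hk2⟩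

lemma ZA2 (hp : p.Prime) (x : ZMod (p^(i+N))) :
    ∃ η : ℕ, 1 ≤ η ∧ η ≤ p^N ∧ (p : ZMod (p^(i+N)))^i * x =
      (η : ZMod (p^(i+N))) * (p : ZMod (p^(i+N)))^i := by
  obtain ⟨k, hk, hk2⟩ := key_mul hp x
  rcases Nat.eq_zero_or_pos k with rfl | hpos
  · refine ⟨p^N, Nat.one_le_iff_ne_zero.mpr (pow_ne_zero _ hp.pos.ne'), le_rfl, ?_⟩
    rw [hk2]
    have h0 : ((p^N : ℕ) : ZMod (p^(i+N))) * (p : ZMod (p^(i+N)))^i = 0 := by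
      have := mul_pow_mod (i := i) (N := N) hp (p^N)
      simpa using this
    push_cast at h0 ⊢
    rw [h0]
    simp
  · exact ⟨k, hpos, hk.le, hk2⟩

lemma uOrder (hp : p.Prime) (hodd : Odd p) (hi : 1 ≤ i) (hN : 1 ≤ N) :
    orderOf ((Zunit (N := N) hp hi).unit) = p ^ N := by
  set u := (Zunit (N := N) hp hi).unit with hu
  have hcoe : (u : ZMod (p^(i+N))) = 1 - (p : ZMod (p^(i+N)))^i := (Zunit hp hi).unit_spec
  have hu_pow : u ^ (p^N) = 1 := by
    ext
    push_cast [hcoe]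
    exact Zord1 hp hodd hi
  obtain ⟨j, hj_le, hj⟩ := (Nat.dvd_prime_pow hp).mp (orderOf_dvd_of_pow_eq_one hu_pow)
  rcases Nat.lt_or_ge j N with hlt | hge
  · exfalso
    have hdvd : orderOf u ∣ p^(N-1) := hj ▸ pow_dvd_pow p (by omega)
    have : u ^ (p^(N-1)) = 1 := orderOf_dvd_iff_pow_eq_one.mp hdvd
    apply Zord2 hp hodd hi hN
    have := congrArg (Units.val) this
    push_cast [hcoe] at this
    exact this
  · rw [hj]; congr 1; omega

lemma ZA3 (hp : p.Prime) (hodd : Odd p) (hi : 1 ≤ i) (hN : 1 ≤ N) (μ : ℕ) :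
    ∃ s : ℕ, (1 - (p : ZMod (p^(i+N)))^i)^s =
      1 + (μ : ZMod (p^(i+N))) * (p : ZMod (p^(i+N)))^i := by
  haveI : NeZero (p^N) := ⟨pow_ne_zero _ hp.pos.ne'⟩
  haveI : NeZero (p^(i+N)) := ⟨pow_ne_zero _ hp.pos.ne'⟩
  set u := (Zunit (N := N) hp hi).unit with hu
  have hcoe : (u : ZMod (p^(i+N))) = 1 - (p : ZMod (p^(i+N)))^i := (Zunit hp hi).unit_spec
  set F : ZMod (p^N) → ZMod (p^(i+N)) := fun s => ((u ^ s.val : (ZMod (p^(i+N)))ˣ) : ZMod (p^(i+N))) with hF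
  set G : ZMod (p^N) → ZMod (p^(i+N)) := fun m => 1 + (m.val : ZMod (p^(i+N))) * (p : ZMod (p^(i+N)))^i with hG
  have hFinj : Function.Injective F := by
    intro s₁ s₂ h
    have h2 : u ^ s₁.val = u ^ s₂.val := Units.ext h
    rw [pow_eq_pow_iff_modEq, uOrder hp hodd hi hN] at h2
    exact ZMod.val_injective _ ((Nat.mod_eq_of_lt (ZMod.val_lt s₁)) ▸ (Nat.mod_eq_of_lt (ZMod.val_lt s₂)) ▸ h2)
  have hGinj : Function.Injective G := by
    intro m₁ m₂ h
    have h2 : ((m₁.val * p^i : ℕ) : ZMod (p^(i+N))) = ((m₂.val * p^i : ℕ) : ZMod (p^(i+N))) := by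
      push_cast
      linear_combination h
    rw [ZMod.natCast_eq_natCast_iff] at h2
    rw [pow_add] at h2
    have h3 : m₁.val ≡ m₂.val [MOD p^N] :=
      Nat.ModEq.mul_right_cancel' (pow_ne_zero _ hp.pos.ne') (by rwa [mul_comm (p^i) (p^N)] at h2)
    exact ZMod.val_injective _ ((Nat.mod_eq_of_lt (ZMod.val_lt m₁)) ▸ (Nat.mod_eq_of_lt (ZMod.val_lt m₂)) ▸ h3)
  have hsub : Finset.univ.image F ⊆ Finset.univ.image G := by
    intro x hx
    obtain ⟨s, -, rfl⟩ := Finset.mem_image.mp hx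
    obtain ⟨k, hk, hk2⟩ := key_pow (i := i) (N := N) hp s.val
    refine Finset.mem_image.mpr ⟨(k : ZMod (p^N)), Finset.mem_univ _, ?_⟩
    rw [hG]
    simp only
    rw [ZMod.val_natCast, Nat.mod_eq_of_lt hk, hF]
    simp only
    rw [← hk2]
    push_cast [hcoe]
    rfl
  have hcard : (Finset.univ.image G).card ≤ (Finset.univ.image F).card := by
    rw [Finset.card_image_of_injective _ hFinj, Finset.card_image_of_injective _ hGinj]
  have heq : Finset.univ.image F = Finset.univ.image G :=
    Finset.eq_of_subset_of_card_le hsub hcard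
  have hmem : G ((μ : ZMod (p^N))) ∈ Finset.univ.image F := by
    rw [heq]; exact Finset.mem_image_of_mem _ (Finset.mem_univ _)
  obtain ⟨s, -, hs⟩ := Finset.mem_image.mp hmem
  refine ⟨s.val, ?_⟩
  have hFs : F s = (1 - (p : ZMod (p^(i+N)))^i)^s.val := by
    rw [hF]; push_cast [hcoe]; rfl
  have hGμ : G ((μ : ZMod (p^N))) = 1 + (μ : ZMod (p^(i+N))) * (p : ZMod (p^(i+N)))^i := by
    rw [hG]
    simp only
    rw [ZMod.val_natCast]
    have := mul_pow_mod (i := i) (N := N) hp μ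
    rw [← this]
  rw [← hFs, hs, hGμ]


section MModel

@[ext] structure MMod (q : ℕ) (u : (ZMod q)ˣ) : Type where
  t : ZMod q
  s : ZMod q

variable {q : ℕ} {u : (ZMod q)ˣ}

lemma upow_mod (hu : u ^ q = 1) (k : ℕ) : u ^ (k % q) = u ^ k := by
  conv_rhs => rw [← Nat.mod_add_div k q]
  rw [pow_add, pow_mul, hu, one_pow, mul_one]

variable (u) in
/-- the cocycle -/
def cc (x : ZMod q) : (ZMod q)ˣ := u ^ x.val

lemma cc_add [NeZero q] (hu : u ^ q = 1) (x y : ZMod q) :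
    cc u (x + y) = cc u x * cc u y := by
  unfold cc
  rw [ZMod.val_add, upow_mod hu, pow_add]

lemma cc_zero [NeZero q] : cc u (0 : ZMod q) = 1 := by
  unfold cc
  rw [ZMod.val_zero, pow_zero]

instance : Mul (MMod q u) := ⟨fun g₁ g₂ => ⟨g₁.t + (cc u g₁.s : ZMod q) * g₂.t, g₁.s + g₂.s⟩⟩
instance : One (MMod q u) := ⟨⟨0, 0⟩⟩
instance : Inv (MMod q u) := ⟨fun g => ⟨-((cc u g.s)⁻¹ : (ZMod q)ˣ) * g.t, -g.s⟩⟩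

lemma MMod.mul_def (g₁ g₂ : MMod q u) :
    g₁ * g₂ = ⟨g₁.t + (cc u g₁.s : ZMod q) * g₂.t, g₁.s + g₂.s⟩ := rfl
lemma MMod.one_def : (1 : MMod q u) = ⟨0, 0⟩ := rfl
lemma MMod.inv_def (g : MMod q u) :
    g⁻¹ = ⟨-((cc u g.s)⁻¹ : (ZMod q)ˣ) * g.t, -g.s⟩ := rfl

lemma cc_neg [NeZero q] (hu : u ^ q = 1) (x : ZMod q) : cc u (-x) = (cc u x)⁻¹ := by
  have h : cc u (-x) * cc u x = 1 := by rw [← cc_add hu, neg_add_cancel, cc_zero]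
  exact eq_inv_of_mul_eq_one_left h

variable [NeZero q] [Fact (u ^ q = 1)]

instance MMod.instGroup : Group (MMod q u) :=
  have hu : u ^ q = 1 := Fact.out
  Group.ofLeftAxioms
    (fun g₁ g₂ g₃ => by
      simp only [MMod.mul_def, cc_add hu]
      ext <;> simp <;> ring)
    (fun g => by simp [MMod.mul_def, MMod.one_def, cc_zero])
    (fun g => by
      simp only [MMod.mul_def, MMod.inv_def, MMod.one_def, cc_neg hu]
      ext <;> simp)

end MModel

section MModel2
variable {q : ℕ} {u : (ZMod q)ˣ} [NeZero q] [Fact (u ^ q = 1)]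

variable (q u) in
def AA : MMod q u := ⟨1, 0⟩
variable (q u) in
def BB : MMod q u := ⟨0, 1⟩

lemma AA_pow (k : ℕ) : (AA q u) ^ k = ⟨(k : ZMod q), 0⟩ := by
  induction k with
  | zero => simp [MMod.one_def]
  | succ k ih =>
    rw [pow_succ, ih, AA, MMod.mul_def]
    ext <;> simp [cc_zero] <;> push_cast <;> ring

lemma BB_pow (k : ℕ) : (BB q u) ^ k = ⟨0, (k : ZMod q)⟩ := by
  induction k with
  | zero => simp [MMod.one_def]
  | succ k ih =>
    rw [pow_succ, ih, BB, MMod.mul_def]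
    ext <;> push_cast <;> simp

lemma MMod.decomp (g : MMod q u) : g = (AA q u) ^ g.t.val * (BB q u) ^ g.s.val := by
  rw [AA_pow, BB_pow, MMod.mul_def]
  ext <;> simp [ZMod.natCast_zmod_val]

lemma monoidHom_ext_AB {H : Type*} [Monoid H] (f g : MMod q u →* H)
    (hA : f (AA q u) = g (AA q u)) (hB : f (BB q u) = g (BB q u)) : f = g := by
  ext x
  rw [MMod.decomp x, map_mul, map_mul, map_pow, map_pow, map_pow, map_pow, hA, hB]

lemma mulEquiv_ext_AB (f g : MMod q u ≃* MMod q u)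
    (hA : f (AA q u) = g (AA q u)) (hB : f (BB q u) = g (BB q u)) : f = g := by
  have h := monoidHom_ext_AB f.toMonoidHom g.toMonoidHom hA hB
  refine MulEquiv.ext fun x => ?_
  simpa using DFunLike.congr_fun h x

lemma conj_AA (g : MMod q u) : g * AA q u * g⁻¹ = ⟨(cc u g.s : ZMod q), 0⟩ := by
  have hu : u ^ q = 1 := Fact.out
  rw [AA, MMod.mul_def, MMod.inv_def, MMod.mul_def]
  have hc : (cc u g.s : ZMod q) * (((cc u g.s)⁻¹ : (ZMod q)ˣ) : ZMod q) = 1 := by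
    rw [← Units.val_mul, mul_inv_cancel, Units.val_one]
  ext
  · simp only [add_zero]
    linear_combination (-g.t) * hc
  · simp

lemma cc_one (hq : 1 < q) : cc u (1 : ZMod q) = u := by
  unfold cc
  haveI : Fact (1 < q) := ⟨hq⟩
  rw [ZMod.val_one, pow_one]

lemma conj_BB (hq : 1 < q) (g : MMod q u) :
    g * BB q u * g⁻¹ = ⟨g.t - (u : ZMod q) * g.t, 1⟩ := by
  have hu : u ^ q = 1 := Fact.out
  rw [BB, MMod.mul_def, MMod.inv_def, MMod.mul_def]
  have hc : (cc u g.s : ZMod q) * (((cc u g.s)⁻¹ : (ZMod q)ˣ) : ZMod q) = 1 := by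
    rw [← Units.val_mul, mul_inv_cancel, Units.val_one]
  ext
  · simp only
    rw [cc_add hu, cc_one hq]
    push_cast
    linear_combination (-(u : ZMod q) * g.t) * hc
  · simp

lemma BB_mul_AA_pow (hq : 1 < q) (k : ℕ) :
    BB q u * (AA q u) ^ k = ⟨(u : ZMod q) * (k : ZMod q), 1⟩ := by
  rw [AA_pow, BB, MMod.mul_def]
  ext
  · simp [cc_one hq]
  · simp

end MModel2

section Main
variable {p i N : ℕ}

theorem MM_main (hp : p.Prime) (hodd : Odd p) (hi : 1 ≤ i) (hN : 1 ≤ N)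
    (u : (ZMod (p^(i+N)))ˣ) [NeZero (p^(i+N))] [Fact (u^(p^(i+N)) = 1)]
    (hu : (u : ZMod (p^(i+N))) = 1 - (p : ZMod (p^(i+N)))^i)
    (θ : MulAut (MMod (p^(i+N)) u)) :
    θ ∈ innAut (MMod (p^(i+N)) u) ↔
      ∃ μ η : ℕ, 1 ≤ μ ∧ μ ≤ p^N ∧ 1 ≤ η ∧ η ≤ p^N ∧
        θ (AA (p^(i+N)) u) = (AA (p^(i+N)) u) ^ (1 + μ * p^i) ∧
        θ (BB (p^(i+N)) u) = BB (p^(i+N)) u * (AA (p^(i+N)) u) ^ (η * p^i) := by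
  have hu1 : u ^ (p^(i+N)) = 1 := Fact.out
  have hq : 1 < p^(i+N) := Nat.one_lt_pow (by omega) hp.one_lt
  constructor
  · rintro ⟨g, hg⟩
    obtain ⟨μ, hμ1, hμ2, hμ3⟩ := ZA1 (i := i) (N := N) hp g.s.val
    obtain ⟨η, hη1, hη2, hη3⟩ := ZA2 (i := i) (N := N) hp ((↑(u⁻¹) : ZMod (p^(i+N))) * g.t)
    refine ⟨μ, η, hμ1, hμ2, hη1, hη2, ?_, ?_⟩
    · rw [← hg]
      have h1 : MulAut.conj g (AA (p^(i+N)) u) = g * AA (p^(i+N)) u * g⁻¹ := rfl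
      rw [h1, conj_AA, AA_pow]
      have h2 : (cc u g.s : ZMod (p^(i+N))) = (1 - (p : ZMod (p^(i+N)))^i)^(g.s.val) := by
        rw [cc, ← hu]
        push_cast
        rfl
      ext
      · simp only [h2, hμ3]; push_cast; ring
      · rfl
    · rw [← hg]
      have h1 : MulAut.conj g (BB (p^(i+N)) u) = g * BB (p^(i+N)) u * g⁻¹ := rfl
      rw [h1, conj_BB hq, BB_mul_AA_pow hq]
      have hc : (↑u : ZMod (p^(i+N))) * ↑(u⁻¹) = 1 := by
        rw [← Units.val_mul, mul_inv_cancel, Units.val_one]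
      ext
      · simp only
        have hstep1 : g.t - (↑u : ZMod (p^(i+N))) * g.t = (p : ZMod (p^(i+N)))^i * g.t := by
          linear_combination (-g.t) * hu
        have hstep2 : (p : ZMod (p^(i+N)))^i * g.t =
            (↑u : ZMod (p^(i+N))) * ((p : ZMod (p^(i+N)))^i * ((↑(u⁻¹) : ZMod (p^(i+N))) * g.t)) := by
          linear_combination (-((p : ZMod (p^(i+N)))^i) * g.t) * hc
        rw [hstep1, hstep2, hη3]
        push_cast
        ring
      · rfl
  · rintro ⟨μ, η, hμ1, hμ2, hη1, hη2, hA, hB⟩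
    obtain ⟨s, hs⟩ := ZA3 (i := i) (N := N) hp hodd hi hN μ
    set g : MMod (p^(i+N)) u := ⟨(↑u : ZMod (p^(i+N))) * (η : ZMod (p^(i+N))), (s : ZMod (p^(i+N)))⟩ with hgdef
    refine ⟨g, ?_⟩
    refine mulEquiv_ext_AB _ _ ?_ ?_
    · have h1 : MulAut.conj g (AA (p^(i+N)) u) = g * AA (p^(i+N)) u * g⁻¹ := rfl
      rw [h1, conj_AA, hA, AA_pow]
      have h2 : (cc u g.s : ZMod (p^(i+N))) = (1 - (p : ZMod (p^(i+N)))^i)^s := by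
        rw [cc, ← hu, hgdef]
        have : u ^ ((s : ZMod (p^(i+N))).val) = u ^ s := by
          rw [ZMod.val_natCast, upow_mod hu1]
        simp only [this]
        push_cast
        rfl
      ext
      · simp only [h2, hs]; push_cast; ring
      · rfl
    · have h1 : MulAut.conj g (BB (p^(i+N)) u) = g * BB (p^(i+N)) u * g⁻¹ := rfl
      rw [h1, conj_BB hq, hB, BB_mul_AA_pow hq]
      ext
      · simp only [hgdef]
        have hstep1 : (↑u : ZMod (p^(i+N))) * (η : ZMod (p^(i+N))) -
            (↑u : ZMod (p^(i+N))) * ((↑u : ZMod (p^(i+N))) * (η : ZMod (p^(i+N)))) =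
            (p : ZMod (p^(i+N)))^i * ((↑u : ZMod (p^(i+N))) * (η : ZMod (p^(i+N)))) := by
          linear_combination (-((↑u : ZMod (p^(i+N))) * (η : ZMod (p^(i+N))))) * hu
        rw [hstep1]
        push_cast
        ring
      · rfl
end Main

section PowHelpers
variable {G : Type*} [Monoid G] {g : G} {q : ℕ}

lemma pow_mod_eq (hg : g ^ q = 1) (k : ℕ) : g ^ (k % q) = g ^ k := by
  conv_rhs => rw [← Nat.mod_add_div k q]
  rw [pow_add, pow_mul, hg, one_pow, mul_one]

variable [NeZero q]

lemma pow_val_add (hg : g ^ q = 1) (x y : ZMod q) :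
    g ^ (x + y).val = g ^ x.val * g ^ y.val := by
  rw [ZMod.val_add, pow_mod_eq hg, pow_add]

lemma pow_val_natCast (hg : g ^ q = 1) (k : ℕ) : g ^ ((k : ZMod q)).val = g ^ k := by
  rw [ZMod.val_natCast]; exact pow_mod_eq hg k

lemma pow_val_pow (hg : g ^ q = 1) (x : ZMod q) (k : ℕ) :
    (g ^ x.val) ^ k = g ^ ((k : ZMod q) * x).val := by
  induction k with
  | zero => simp
  | succ k ih =>
    rw [pow_succ, ih, ← pow_val_add hg]
    congr 1
    have : ((k : ZMod q) * x + x) = (((k+1 : ℕ) : ZMod q) * x) := by push_cast; ring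
    rw [this]

end PowHelpers

lemma mk_rel_one {α : Type*} {rels : Set (FreeGroup α)} {r : FreeGroup α} (h : r ∈ rels) :
    PresentedGroup.mk rels r = 1 :=
  (QuotientGroup.eq_one_iff _).mpr (Subgroup.subset_normalClosure h)

section PLemmas
variable (p e i : ℕ)

lemma rel_a : (ma p e i) ^ (p ^ e) = 1 := by
  have h := mk_rel_one (rels := MRels p e i) (Set.mem_insert _ _)
  rw [map_pow] at h
  exact h

lemma rel_b : (mb p e i) ^ (p ^ e) = 1 := by
  have h := mk_rel_one (rels := MRels p e i)
    (Set.mem_insert_of_mem _ (Set.mem_insert _ _))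
  rw [map_pow] at h
  exact h

lemma rel_comm : ma p e i * mb p e i * (ma p e i)⁻¹ * (mb p e i)⁻¹ = (ma p e i) ^ (p ^ i) := by
  have h := mk_rel_one (rels := MRels p e i)
    (Set.mem_insert_of_mem _ (Set.mem_insert_of_mem _ rfl))
  rw [commutatorElement_def] at h
  simp only [map_mul, map_inv, map_pow] at h
  have h2 := mul_eq_one_iff_eq_inv.mp h
  rw [inv_inv] at h2
  exact h2

lemma bab : mb p e i * ma p e i * (mb p e i)⁻¹ = ((ma p e i) ^ (p ^ i))⁻¹ * ma p e i := by
  rw [← rel_comm p e i]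
  group
end PLemmas

section PConj
variable (p e i : ℕ)

lemma bab' (hq : 1 < p ^ e) :
    mb p e i * ma p e i * (mb p e i)⁻¹ =
      (ma p e i) ^ ((1 - (p : ZMod (p^e))^i : ZMod (p^e))).val := by
  haveI : NeZero (p ^ e) := ⟨by omega⟩
  haveI : Fact (1 < p ^ e) := ⟨hq⟩
  have h1 : (ma p e i) ^ ((1 - (p : ZMod (p^e))^i : ZMod (p^e))).val * (ma p e i) ^ (p ^ i) =
      ma p e i := by
    rw [← pow_val_natCast (rel_a p e i) (p ^ i), ← pow_val_add (rel_a p e i)]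
    have h2 : (1 - (p : ZMod (p^e))^i + ((p ^ i : ℕ) : ZMod (p^e))) = 1 := by
      push_cast; ring
    rw [h2, ZMod.val_one, pow_one]
  have h3 : (ma p e i) ^ ((1 - (p : ZMod (p^e))^i : ZMod (p^e))).val =
      ma p e i * ((ma p e i) ^ (p ^ i))⁻¹ := eq_mul_inv_of_mul_eq h1
  rw [bab p e i, h3]
  have hcomm : Commute (ma p e i) (((ma p e i) ^ (p ^ i))⁻¹) :=
    (((Commute.refl (ma p e i)).pow_right (p ^ i)).inv_right)
  rw [hcomm.eq]

lemma conj_b_pow (hq : 1 < p ^ e) (x : ZMod (p^e)) :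
    mb p e i * (ma p e i) ^ x.val * (mb p e i)⁻¹ =
      (ma p e i) ^ (((1 - (p : ZMod (p^e))^i) * x : ZMod (p^e))).val := by
  haveI : NeZero (p ^ e) := ⟨by omega⟩
  have h1 : mb p e i * (ma p e i) ^ x.val * (mb p e i)⁻¹ =
      (mb p e i * ma p e i * (mb p e i)⁻¹) ^ x.val := by
    rw [conj_pow]
  rw [h1, bab' p e i hq, pow_val_pow (rel_a p e i), ZMod.natCast_zmod_val, mul_comm]

lemma conj_bpow_pow (hq : 1 < p ^ e) (k : ℕ) (x : ZMod (p^e)) :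
    (mb p e i) ^ k * (ma p e i) ^ x.val * ((mb p e i) ^ k)⁻¹ =
      (ma p e i) ^ ((((1 - (p : ZMod (p^e))^i))^k * x : ZMod (p^e))).val := by
  induction k generalizing x with
  | zero => simp
  | succ k ih =>
    have h1 : (mb p e i) ^ (k+1) * (ma p e i) ^ x.val * ((mb p e i) ^ (k+1))⁻¹ =
        mb p e i * ((mb p e i) ^ k * (ma p e i) ^ x.val * ((mb p e i) ^ k)⁻¹) * (mb p e i)⁻¹ := by
      rw [pow_succ']
      group
    rw [h1, ih, conj_b_pow p e i hq]
    congr 1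
    rw [pow_succ]
    ring_nf

end PConj

section Psi
variable (p e i : ℕ) (u : (ZMod (p^e))ˣ) [NeZero (p^e)] [Fact (u ^ (p^e) = 1)]

def psi0 (g : MMod (p^e) u) : MGroup p e i := (ma p e i) ^ g.t.val * (mb p e i) ^ g.s.val

lemma psi0_mul (hq : 1 < p ^ e) (hu : (u : ZMod (p^e)) = 1 - (p : ZMod (p^e))^i)
    (g₁ g₂ : MMod (p^e) u) :
    psi0 p e i u (g₁ * g₂) = psi0 p e i u g₁ * psi0 p e i u g₂ := by
  unfold psi0
  rw [MMod.mul_def]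
  simp only
  rw [pow_val_add (rel_a p e i), pow_val_add (rel_b p e i)]
  have hcc : ((cc u g₁.s : ZMod (p^e)) * g₂.t) = (1 - (p : ZMod (p^e))^i)^(g₁.s.val) * g₂.t := by
    rw [cc, ← hu]
    push_cast
    rfl
  have key := conj_bpow_pow p e i hq g₁.s.val g₂.t
  rw [hcc, ← key]
  group

def psiH (hq : 1 < p ^ e) (hu : (u : ZMod (p^e)) = 1 - (p : ZMod (p^e))^i) :
    MMod (p^e) u →* MGroup p e i :=
  MonoidHom.mk' (psi0 p e i u) (psi0_mul p e i u hq hu)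

def fAB : Bool → MMod (p^e) u := fun x => bif x then AA (p^e) u else BB (p^e) u

lemma fAB_rels (hq : 1 < p ^ e) (hu : (u : ZMod (p^e)) = 1 - (p : ZMod (p^e))^i) :
    ∀ r ∈ MRels p e i, FreeGroup.lift (fAB p e u) r = 1 := by
  intro r hr
  have hfa : FreeGroup.lift (fAB p e u) fA = AA (p^e) u := by
    rw [fA, FreeGroup.lift_apply_of]; rfl
  have hfb : FreeGroup.lift (fAB p e u) fB = BB (p^e) u := by
    rw [fB, FreeGroup.lift_apply_of]; rfl
  rcases hr with rfl | rfl | rfl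
  · rw [map_pow, hfa, AA_pow, ZMod.natCast_self]
    rfl
  · rw [map_pow, hfb, BB_pow, ZMod.natCast_self]
    rfl
  · rw [commutatorElement_def]
    simp only [map_mul, map_inv, map_pow, hfa, hfb]
    have h1 : AA (p^e) u * BB (p^e) u * (AA (p^e) u)⁻¹ = ⟨1 - (u : ZMod (p^e)) * 1, 1⟩ :=
      conj_BB hq _
    have h2 : AA (p^e) u * BB (p^e) u * (AA (p^e) u)⁻¹ * (BB (p^e) u)⁻¹ =
        (AA (p^e) u) ^ (p^i) := by
      rw [h1, AA_pow, BB, MMod.inv_def, MMod.mul_def]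
      ext
      · simp only
        push_cast
        linear_combination -hu
      · simp
    rw [h2]
    group

def phiH (hq : 1 < p ^ e) (hu : (u : ZMod (p^e)) = 1 - (p : ZMod (p^e))^i) :
    MGroup p e i →* MMod (p^e) u :=
  PresentedGroup.toGroup (fAB_rels p e i u hq hu)

lemma phiH_a (hq) (hu) : phiH p e i u hq hu (ma p e i) = AA (p^e) u :=
  PresentedGroup.toGroup.of _

lemma phiH_b (hq) (hu) : phiH p e i u hq hu (mb p e i) = BB (p^e) u :=
  PresentedGroup.toGroup.of _

lemma psi_phi (hq) (hu) :
    (psiH p e i u hq hu).comp (phiH p e i u hq hu) = MonoidHom.id (MGroup p e i) := by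
  haveI : Fact (1 < p ^ e) := ⟨hq⟩
  apply PresentedGroup.ext
  intro x
  simp only [MonoidHom.comp_apply, MonoidHom.id_apply]
  cases x
  · show psiH p e i u hq hu (phiH p e i u hq hu (mb p e i)) = mb p e i
    rw [phiH_b]
    show (ma p e i) ^ ((0 : ZMod (p^e))).val * (mb p e i) ^ ((1 : ZMod (p^e))).val = mb p e i
    rw [ZMod.val_zero, ZMod.val_one, pow_zero, pow_one, one_mul]
  · show psiH p e i u hq hu (phiH p e i u hq hu (ma p e i)) = ma p e i
    rw [phiH_a]
    show (ma p e i) ^ ((1 : ZMod (p^e))).val * (mb p e i) ^ ((0 : ZMod (p^e))).val = ma p e i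
    rw [ZMod.val_zero, ZMod.val_one, pow_zero, pow_one, mul_one]

lemma phi_psi (hq) (hu) :
    (phiH p e i u hq hu).comp (psiH p e i u hq hu) = MonoidHom.id (MMod (p^e) u) := by
  apply MonoidHom.ext
  intro g
  show phiH p e i u hq hu ((ma p e i) ^ g.t.val * (mb p e i) ^ g.s.val) = g
  rw [map_mul, map_pow, map_pow, phiH_a, phiH_b]
  exact (MMod.decomp g).symm

def EIso (hq : 1 < p ^ e) (hu : (u : ZMod (p^e)) = 1 - (p : ZMod (p^e))^i) :
    MGroup p e i ≃* MMod (p^e) u :=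
  MonoidHom.toMulEquiv (phiH p e i u hq hu) (psiH p e i u hq hu)
    (psi_phi p e i u hq hu) (phi_psi p e i u hq hu)

end Psi

lemma innAut_map {G H : Type*} [Group G] [Group H] (E : G ≃* H) (θ : MulAut G)
    (h : θ ∈ innAut G) : ((E.symm.trans (θ.trans E)) : MulAut H) ∈ innAut H := by
  obtain ⟨g, hg⟩ := h
  refine ⟨E g, ?_⟩
  refine MulEquiv.ext fun x => ?_
  show MulAut.conj (E g) x = E (θ (E.symm x))
  rw [← hg]
  show E g * x * (E g)⁻¹ = E (g * E.symm x * g⁻¹)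
  rw [map_mul, map_mul, map_inv, E.apply_symm_apply]

lemma innAut_iff {G H : Type*} [Group G] [Group H] (E : G ≃* H) (θ : MulAut G) :
    θ ∈ innAut G ↔ ((E.symm.trans (θ.trans E)) : MulAut H) ∈ innAut H := by
  constructor
  · exact innAut_map E θ
  · intro h
    have h2 := innAut_map E.symm (E.symm.trans (θ.trans E)) h
    have h3 : (E.symm.symm.trans ((E.symm.trans (θ.trans E)).trans E.symm)) = θ :=
      MulEquiv.ext fun x => by simp
    rwa [h3] at h2

section CoreSec
variable {p i N : ℕ}

theorem core (hp : p.Prime) (hodd : Odd p) (hi : 1 ≤ i) (hN : 1 ≤ N)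
    (θ : MulAut (MGroup p (i+N) i)) :
    θ ∈ innAut (MGroup p (i+N) i) ↔
      ∃ μ η : ℕ, 1 ≤ μ ∧ μ ≤ p ^ N ∧ 1 ≤ η ∧ η ≤ p ^ N ∧
        θ (ma p (i+N) i) = ma p (i+N) i ^ (1 + μ * p ^ i) ∧
        θ (mb p (i+N) i) = mb p (i+N) i * ma p (i+N) i ^ (η * p ^ i) := by
  haveI : NeZero (p^(i+N)) := ⟨pow_ne_zero _ hp.pos.ne'⟩
  have hq : 1 < p^(i+N) := Nat.one_lt_pow (by omega) hp.one_lt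
  have hU := Zunit (N := N) hp hi
  set u := hU.unit with hudef
  have hu : (u : ZMod (p^(i+N))) = 1 - (p : ZMod (p^(i+N)))^i := hU.unit_spec
  have hu1 : u ^ (p^(i+N)) = 1 := by
    have h1 : u ^ (p^N) = 1 := by
      ext
      push_cast [hu]
      exact Zord1 hp hodd hi
    have h2 : p^(i+N) = p^N * p^i := by rw [← pow_add, Nat.add_comm]
    calc u ^ (p^(i+N)) = (u ^ (p^N))^(p^i) := by rw [← pow_mul, ← h2]
      _ = 1 := by rw [h1, one_pow]
  haveI : Fact (u ^ (p^(i+N)) = 1) := ⟨hu1⟩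
  set E := EIso p (i+N) i u hq hu with hE
  rw [innAut_iff E θ, MM_main hp hodd hi hN u hu]
  have hEa : E (ma p (i+N) i) = AA (p^(i+N)) u := phiH_a p (i+N) i u hq hu
  have hEb : E (mb p (i+N) i) = BB (p^(i+N)) u := phiH_b p (i+N) i u hq hu
  have hEsa : E.symm (AA (p^(i+N)) u) = ma p (i+N) i := by
    rw [← hEa, MulEquiv.symm_apply_apply]
  have hEsb : E.symm (BB (p^(i+N)) u) = mb p (i+N) i := by
    rw [← hEb, MulEquiv.symm_apply_apply]
  have hA_iff : ∀ k : ℕ,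
      ((E.symm.trans (θ.trans E)) (AA (p^(i+N)) u) = (AA (p^(i+N)) u) ^ k) ↔
        (θ (ma p (i+N) i) = (ma p (i+N) i) ^ k) := by
    intro k
    have h1 : (E.symm.trans (θ.trans E)) (AA (p^(i+N)) u) = E (θ (ma p (i+N) i)) := by
      rw [MulEquiv.trans_apply, MulEquiv.trans_apply, hEsa]
    rw [h1, ← hEa, ← map_pow]
    exact E.injective.eq_iff
  have hB_iff : ∀ k : ℕ,
      ((E.symm.trans (θ.trans E)) (BB (p^(i+N)) u) =
          BB (p^(i+N)) u * (AA (p^(i+N)) u) ^ k) ↔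
        (θ (mb p (i+N) i) = mb p (i+N) i * (ma p (i+N) i) ^ k) := by
    intro k
    have h1 : (E.symm.trans (θ.trans E)) (BB (p^(i+N)) u) = E (θ (mb p (i+N) i)) := by
      rw [MulEquiv.trans_apply, MulEquiv.trans_apply, hEsb]
    rw [h1, ← hEa, ← hEb, ← map_pow, ← map_mul]
    exact E.injective.eq_iff
  constructor
  · rintro ⟨μ, η, w1, w2, w3, w4, wA, wB⟩
    exact ⟨μ, η, w1, w2, w3, w4, (hA_iff _).mp wA, (hB_iff _).mp wB⟩
  · rintro ⟨μ, η, w1, w2, w3, w4, wA, wB⟩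
    exact ⟨μ, η, w1, w2, w3, w4, (hA_iff _).mpr wA, (hB_iff _).mpr wB⟩

end CoreSec


end Stmt4Aux

section Statements

theorem statement4 (p e i : ℕ) (hp : p.Prime) (hodd : Odd p) (h1 : 1 ≤ i) (h2 : i ≤ e - 1) :
    ∀ θ : MulAut (MGroup p e i),
      θ ∈ innAut (MGroup p e i) ↔
      ∃ μ η : ℕ, 1 ≤ μ ∧ μ ≤ p ^ (e - i) ∧ 1 ≤ η ∧ η ≤ p ^ (e - i) ∧
        θ (ma p e i) = ma p e i ^ (1 + μ * p ^ i) ∧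
        θ (mb p e i) = mb p e i * ma p e i ^ (η * p ^ i) := by
  obtain ⟨N, rfl⟩ : ∃ N, e = i + N := ⟨e - i, by omega⟩
  intro θ
  have hN : 1 ≤ N := by omega
  have hkey := core hp hodd h1 hN θ
  simpa [show i + N - i = N from by omega] using hkey

end Statements

end Beauville
end
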